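/- arXiv:2504.15868 — 6 statements merged into one kernel-verified Lean document; each statement's English description precedes it below -/
import Mathlib

section
/- For a Hessenberg function h : [n] → [n], the permutation w_h := (s_{h(1)-1} ⋯ s_2 s_1)(s_{h(2)-1} ⋯ s_2) ⋯ (s_{n-1}), where the block (s_{h(i)-1} ⋯ s_i) is empty if h(i) = i, is a reduced expression; in particular ℓ(w_h) = Σ_{i=1}^{n} (h(i) − i). -/
/-- A Hessenberg function on `Fin n`: `i ≤ h i` and `h` is weakly increasing. -/
def IsHessenberg {n : ℕ} (h : Fin n → Fin n) : Prop :=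
  (∀ i, i ≤ h i) ∧ Monotone h

/-- Lexicographic order on one-line notations of permutations. -/
def LexLE {n : ℕ} (u v : Equiv.Perm (Fin n)) : Prop :=
  u = v ∨ ∃ i : Fin n, (∀ j, j < i → u j = v j) ∧ u i < v i

/-- `w` is bounded by the Hessenberg function `h`: `w i ≤ h i` for all `i`. -/
def Bounded {n : ℕ} (h : Fin n → Fin n) (w : Equiv.Perm (Fin n)) : Prop :=
  ∀ i, w i ≤ h i

/-- `w` is the lexicographically maximal permutation with `w i ≤ h i` for all `i`. -/
def IsMaxFor {n : ℕ} (h : Fin n → Fin n) (w : Equiv.Perm (Fin n)) : Prop :=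
  Bounded h w ∧ ∀ w', Bounded h w' → LexLE w' w

/-- The Coxeter length of a permutation: its number of inversions. -/
def lengthPerm {n : ℕ} (w : Equiv.Perm (Fin n)) : ℕ :=
  (Finset.univ.filter fun p : Fin n × Fin n => p.1 < p.2 ∧ w p.2 < w p.1).card

/-- `w` avoids the pattern 312. -/
def Avoids312 {n : ℕ} (w : Equiv.Perm (Fin n)) : Prop :=
  ¬ ∃ i j k : Fin n, i < j ∧ j < k ∧ w j < w k ∧ w k < w i

/-- The Bruhat order on `S_n`, generated by `w < w * t` for transpositions `t`
with `ℓ(w) < ℓ(w * t)`. -/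
def BruhatLE {n : ℕ} (u w : Equiv.Perm (Fin n)) : Prop :=
  Relation.ReflTransGen
    (fun x y => (∃ t : Equiv.Perm (Fin n), t.IsSwap ∧ y = x * t) ∧
      lengthPerm x < lengthPerm y) u w

/-- The simple transposition `s_k = (k, k+1)` (0-indexed) in `S_n`,
defined to be the identity if out of range. -/
def sN (n k : ℕ) : Equiv.Perm (Fin n) :=
  if hk : k + 1 < n then Equiv.swap ⟨k, Nat.lt_of_succ_lt hk⟩ ⟨k + 1, hk⟩ else 1

/-- The descending block `s_{b-1} s_{b-2} ⋯ s_a` (0-indexed letters). -/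
def blockWord (n a b : ℕ) : List (Equiv.Perm (Fin n)) :=
  ((List.range' a (b - a)).reverse).map (sN n)

/-- The word `(s_{h(1)-1} ⋯ s_1)(s_{h(2)-1} ⋯ s_2) ⋯ (s_{n-1})` associated to a
Hessenberg function `h` (written 0-indexed). -/
def wordOf {n : ℕ} (h : Fin n → Fin n) : List (Equiv.Perm (Fin n)) :=
  (List.finRange n).flatMap fun i : Fin n => blockWord n (i : ℕ) (h i : ℕ)

section aux
variable {n : ℕ}

lemma lengthPerm_one : lengthPerm (1 : Equiv.Perm (Fin n)) = 0 := by
  rw [lengthPerm, Finset.card_eq_zero, Finset.filter_eq_empty_iff]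
  rintro p - ⟨h1, h2⟩
  simp only [Equiv.Perm.one_apply] at h2
  exact absurd h1 (not_lt.2 h2.le)

lemma swap_mono (k : ℕ) (hk : k + 1 < n) (p1 p2 : Fin n) (hlt : p1 < p2)
    (hne : ¬(p1 = (⟨k, Nat.lt_of_succ_lt hk⟩ : Fin n) ∧ p2 = (⟨k+1, hk⟩ : Fin n))) :
    Equiv.swap (⟨k, Nat.lt_of_succ_lt hk⟩ : Fin n) ⟨k+1, hk⟩ p1 <
      Equiv.swap (⟨k, Nat.lt_of_succ_lt hk⟩ : Fin n) ⟨k+1, hk⟩ p2 := by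
  set K : Fin n := ⟨k, Nat.lt_of_succ_lt hk⟩
  set K1 : Fin n := ⟨k+1, hk⟩
  have hv : ∀ x : Fin n, (Equiv.swap K K1 x : ℕ) =
      if (x:ℕ) = k then k+1 else if (x:ℕ) = k+1 then k else x := by
    intro x
    rcases eq_or_ne x K with rfl | hx
    · simp [Equiv.swap_apply_left, K, K1]
    · rcases eq_or_ne x K1 with rfl | hx1
      · rw [Equiv.swap_apply_right]
        rw [if_neg (by simp [K, K1]), if_pos (by simp [K1])]
      · rw [Equiv.swap_apply_of_ne_of_ne hx hx1]
        have h1 : (x:ℕ) ≠ k := Fin.val_ne_iff.2 hx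
        have h2 : (x:ℕ) ≠ k+1 := Fin.val_ne_iff.2 hx1
        simp [h1, h2]
  rw [Fin.lt_def, hv, hv]
  rw [Fin.lt_def] at hlt
  have hne' : ¬((p1:ℕ) = k ∧ (p2:ℕ) = k+1) := by
    rintro ⟨e1, e2⟩
    exact hne ⟨Fin.ext e1, Fin.ext e2⟩
  split_ifs <;> omega

lemma length_mul_sN (w : Equiv.Perm (Fin n)) (k : ℕ) (hk : k + 1 < n)
    (hw : w ⟨k, Nat.lt_of_succ_lt hk⟩ < w ⟨k+1, hk⟩) :
    lengthPerm (w * sN n k) = lengthPerm w + 1 := by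
  set K : Fin n := ⟨k, Nat.lt_of_succ_lt hk⟩
  set K1 : Fin n := ⟨k+1, hk⟩
  have hs : sN n k = Equiv.swap K K1 := dif_pos hk
  set s := Equiv.swap K K1 with hsdef
  set S' := (Finset.univ.filter fun p : Fin n × Fin n => p.1 < p.2 ∧ (w * s) p.2 < (w * s) p.1)
    with hS'
  set S := (Finset.univ.filter fun p : Fin n × Fin n => p.1 < p.2 ∧ w p.2 < w p.1) with hS
  have hKK : K < K1 := by rw [Fin.lt_def]; exact Nat.lt_succ_self k
  have hmem : (K, K1) ∈ S' := by
    simp only [hS', Finset.mem_filter, Finset.mem_univ, true_and]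
    refine ⟨hKK, ?_⟩
    simp only [Equiv.Perm.mul_apply, hsdef, Equiv.swap_apply_left, Equiv.swap_apply_right]
    exact hw
  have hcard : (S'.erase (K, K1)).card = S.card := by
    apply Finset.card_bij' (i := fun p _ => (s p.1, s p.2)) (j := fun p _ => (s p.1, s p.2))
    · rintro p hp
      rw [Finset.mem_erase] at hp
      obtain ⟨hpe, hp⟩ := hp
      simp only [hS', Finset.mem_filter, Finset.mem_univ, true_and] at hp
      obtain ⟨h1, h2⟩ := hp
      simp only [hS, Finset.mem_filter, Finset.mem_univ, true_and]
      refine ⟨?_, ?_⟩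
      · apply swap_mono k hk _ _ h1
        rintro ⟨e1, e2⟩
        exact hpe (by rw [Prod.ext_iff]; exact ⟨e1, e2⟩)
      · simpa only [Equiv.Perm.mul_apply] using h2
    · rintro p hp
      simp only [hS, Finset.mem_filter, Finset.mem_univ, true_and] at hp
      obtain ⟨h1, h2⟩ := hp
      rw [Finset.mem_erase]
      constructor
      · intro hc
        rw [Prod.ext_iff] at hc
        have e1 : s p.1 = K := hc.1
        have e2 : s p.2 = K1 := hc.2
        have t1 : p.1 = s K := by rw [← e1, hsdef, Equiv.swap_apply_self]
        have t2 : p.2 = s K1 := by rw [← e2, hsdef, Equiv.swap_apply_self]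
        rw [hsdef, Equiv.swap_apply_left] at t1
        rw [hsdef, Equiv.swap_apply_right] at t2
        rw [t1, t2] at h1
        exact absurd hKK (not_lt.2 h1.le)
      · simp only [hS', Finset.mem_filter, Finset.mem_univ, true_and]
        constructor
        · apply swap_mono k hk _ _ h1
          rintro ⟨e1, e2⟩
          rw [e1, e2] at h2
          exact absurd hw (not_lt.2 h2.le)
        · simp only [Equiv.Perm.mul_apply, hsdef, Equiv.swap_apply_self]
          exact h2
    · intro p _; simp [hsdef, Equiv.swap_apply_self]
    · intro p _; simp [hsdef, Equiv.swap_apply_self]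
  have := Finset.card_erase_add_one hmem
  rw [hcard] at this
  rw [lengthPerm, lengthPerm, ← hS, ← hs] at *
  rw [hs] at hS' ⊢
  rw [← hS', ← this]

end aux


section blk
variable {n : ℕ}

lemma blockWord_nil (a b : ℕ) (hab : b ≤ a) : blockWord n a b = [] := by
  unfold blockWord
  rw [show b - a = 0 by omega]
  rfl

lemma blockWord_split (a b : ℕ) (hab : a < b) :
    blockWord n a b = blockWord n (a+1) b ++ [sN n a] := by
  unfold blockWord
  rw [show b - a = (b - (a+1)) + 1 by omega, List.range'_succ]
  rw [List.reverse_cons, List.map_append]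
  rfl

lemma blockProd_apply (b : ℕ) (hb : b < n) :
    ∀ d a, a + d = b → ∀ x : Fin n, (((blockWord n a b).prod) x : ℕ) =
      if (x:ℕ) < a then (x:ℕ) else if (x:ℕ) = a then b
        else if (x:ℕ) ≤ b then (x:ℕ) - 1 else (x:ℕ) := by
  intro d
  induction d with
  | zero =>
    intro a ha x
    rw [blockWord_nil a b (by omega), List.prod_nil]
    simp only [Equiv.Perm.one_apply]
    have hx := x.isLt
    split_ifs <;> omega
  | succ d ih =>
    intro a ha x
    have hab : a < b := by omega
    have ha1 : a + 1 < n := by omega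
    rw [blockWord_split a b hab, List.prod_append, List.prod_cons, List.prod_nil, mul_one,
      Equiv.Perm.mul_apply]
    have hsN : sN n a = Equiv.swap ⟨a, Nat.lt_of_succ_lt ha1⟩ ⟨a+1, ha1⟩ := dif_pos ha1
    rcases eq_or_ne (x:ℕ) a with hxa | hxa
    · have hx : x = ⟨a, Nat.lt_of_succ_lt ha1⟩ := Fin.ext hxa
      rw [hx, hsN, Equiv.swap_apply_left, ih (a+1) (by omega)]
      simp only [Fin.val_mk]
      split_ifs <;> omega
    · rcases eq_or_ne (x:ℕ) (a+1) with hxa1 | hxa1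
      · have hx : x = ⟨a+1, ha1⟩ := Fin.ext hxa1
        rw [hx, hsN, Equiv.swap_apply_right, ih (a+1) (by omega)]
        simp only [Fin.val_mk]
        split_ifs <;> omega
      · rw [hsN, Equiv.swap_apply_of_ne_of_ne (fun hc => hxa (by rw [hc]))
          (fun hc => hxa1 (by rw [hc])), ih (a+1) (by omega)]
        split_ifs <;> omega

lemma length_mul_block (b : ℕ) (hb : b < n) :
    ∀ d a, a + d = b → ∀ Q : Equiv.Perm (Fin n),
      (∀ x y : Fin n, a ≤ (x:ℕ) → x < y → Q x < Q y) →
      lengthPerm (Q * (blockWord n a b).prod) = lengthPerm Q + (b - a) := by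
  intro d
  induction d with
  | zero =>
    intro a ha Q _
    rw [blockWord_nil a b (by omega), List.prod_nil, mul_one]
    omega
  | succ d ih =>
    intro a ha Q hQ
    have hab : a < b := by omega
    have ha1 : a + 1 < n := by omega
    rw [blockWord_split a b hab, List.prod_append, List.prod_cons, List.prod_nil, mul_one,
      ← mul_assoc]
    have hrec := ih (a+1) (by omega) Q (fun x y hx hxy => hQ x y (by omega) hxy)
    have hPa : (blockWord n (a+1) b).prod ⟨a, Nat.lt_of_succ_lt ha1⟩
        = ⟨a, Nat.lt_of_succ_lt ha1⟩ := by
      apply Fin.ext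
      rw [blockProd_apply b hb d (a+1) (by omega)]
      simp only [Fin.val_mk]
      split_ifs <;> omega
    have hPa1 : (blockWord n (a+1) b).prod ⟨a+1, ha1⟩ = ⟨b, hb⟩ := by
      apply Fin.ext
      rw [blockProd_apply b hb d (a+1) (by omega)]
      simp only [Fin.val_mk]
      split_ifs <;> omega
    rw [length_mul_sN _ a ha1 ?_, hrec]
    · omega
    · simp only [Equiv.Perm.mul_apply, hPa, hPa1]
      exact hQ _ _ (le_refl a) (by rw [Fin.lt_def]; exact hab)

lemma length_mul_word (H : ℕ → ℕ) (hH : ∀ j, j < n → j ≤ H j ∧ H j < n) :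
    ∀ k i, i + k = n → ∀ Q : Equiv.Perm (Fin n),
      (∀ x y : Fin n, i ≤ (x:ℕ) → x < y → Q x < Q y) →
      lengthPerm (Q * ((List.range' i k).flatMap fun j => blockWord n j (H j)).prod)
        = lengthPerm Q + ((List.range' i k).map fun j => H j - j).sum := by
  intro k
  induction k with
  | zero => intro i _ Q _; simp
  | succ k ih =>
    intro i hik Q hQ
    have hi : i < n := by omega
    obtain ⟨h1, h2⟩ := hH i hi
    rw [List.range'_succ, List.flatMap_cons, List.prod_append, ← mul_assoc,
      List.map_cons, List.sum_cons]
    have hblk := length_mul_block (H i) h2 (H i - i) i (by omega) Q hQ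
    have hmono : ∀ x y : Fin n, i+1 ≤ (x:ℕ) → x < y →
        (Q * (blockWord n i (H i)).prod) x < (Q * (blockWord n i (H i)).prod) y := by
      intro x y hx hxy
      have hxy' : (x:ℕ) < (y:ℕ) := hxy
      have px := blockProd_apply (H i) h2 (H i - i) i (by omega) x
      have py := blockProd_apply (H i) h2 (H i - i) i (by omega) y
      simp only [Equiv.Perm.mul_apply]
      apply hQ
      · rw [px]; split_ifs <;> omega
      · rw [Fin.lt_def, px, py]; split_ifs <;> omega
    rw [ih (i+1) (by omega) _ hmono, hblk]
    omega

end blk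


/-- the word `(s_{h(1)-1}⋯s_1)(s_{h(2)-1}⋯s_2)⋯(s_{n-1})` is a reduced
expression for its product `w_h`; in particular `ℓ(w_h) = ∑ᵢ (h(i) − i)`. -/
theorem stmt1 (n : ℕ) (h : Fin n → Fin n) (hh : IsHessenberg h) :
    lengthPerm (wordOf h).prod = (wordOf h).length ∧
    (wordOf h).length = ∑ i : Fin n, ((h i : ℕ) - (i : ℕ)) := by
  set H : ℕ → ℕ := fun j => if hj : j < n then (h ⟨j, hj⟩ : ℕ) else j with hHdef
  have hH : ∀ j, j < n → j ≤ H j ∧ H j < n := by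
    intro j hj
    simp only [hHdef, dif_pos hj]
    exact ⟨hh.1 ⟨j, hj⟩, (h ⟨j, hj⟩).isLt⟩
  have hfun : (fun a : Fin n => blockWord n (a:ℕ) (H (a:ℕ)))
      = fun a : Fin n => blockWord n (a:ℕ) ((h a : ℕ)) := by
    funext a
    simp only [hHdef, dif_pos a.isLt, Fin.eta]
  have hword : ((List.range' 0 n).flatMap fun j => blockWord n j (H j)) = wordOf h := by
    rw [← List.range_eq_range', ← (show (List.finRange n).map (fun i : Fin n => (i : ℕ)) = List.range n from
      List.ext_getElem (by simp) (by simp)), List.flatMap_map]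
    rw [wordOf, hfun]
  have hsum : ((List.range' 0 n).map fun j => H j - j).sum
      = ∑ i : Fin n, ((h i : ℕ) - (i : ℕ)) := by
    rw [← List.range_eq_range', ← (show (List.finRange n).map (fun i : Fin n => (i : ℕ)) = List.range n from
      List.ext_getElem (by simp) (by simp)), List.map_map, Fin.sum_univ_def]
    congr 1
    apply List.map_congr_left
    intro a _
    simp only [Function.comp_apply, hHdef, dif_pos a.isLt, Fin.eta]
  have hlen : (wordOf h).length = ∑ i : Fin n, ((h i : ℕ) - (i : ℕ)) := by
    rw [wordOf, List.length_flatMap, Fin.sum_univ_def]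
    congr 1
    apply List.map_congr_left
    intro a _
    simp only [Function.comp_apply, blockWord, List.length_map, List.length_reverse,
      List.length_range']
  refine ⟨?_, hlen⟩
  have := length_mul_word H hH n 0 (by omega) 1
    (fun x y _ hxy => by simpa using hxy)
  rw [hword, one_mul, lengthPerm_one, hsum, ← hlen] at this
  omega
end

section
/- A permutation w ∈ S_n is the maximal element (in lexicographic order) among permutations satisfying w(i) ≤ h(i) for all i, for some Hessenberg function h, if and only if w avoids the pattern 312 (i.e., there are no indices i < j < k with w(j) < w(k) < w(i)). -/
/-- `w` is the lexicographic maximum among permutations bounded by some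
Hessenberg function if and only if `w` avoids the pattern 312. -/
theorem stmt2 (n : ℕ) (w : Equiv.Perm (Fin n)) :
    (∃ h : Fin n → Fin n, IsHessenberg h ∧ IsMaxFor h w) ↔ Avoids312 w := by
  constructor
  · rintro ⟨h, ⟨hle, hmono⟩, hbd, hmax⟩ ⟨i, j, k, hij, hjk, h1, h2⟩
    set w' := w * Equiv.swap j k with hw'
    have hne : j ≠ k := ne_of_lt hjk
    have hwj : w' j = w k := by simp [hw']
    have hwk : w' k = w j := by simp [hw']
    have hother : ∀ l, l ≠ j → l ≠ k → w' l = w l := by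
      intro l hl1 hl2
      simp [hw', Equiv.swap_apply_of_ne_of_ne hl1 hl2]
    have hbd' : Bounded h w' := by
      intro l
      by_cases hlj : l = j
      · subst hlj
        rw [hwj]
        exact le_trans (le_of_lt (lt_of_lt_of_le h2 (hbd i))) (hmono hij.le)
      by_cases hlk : l = k
      · subst hlk
        rw [hwk]
        exact le_trans (le_of_lt (h1.trans h2))
          (le_trans (hbd i) (hmono (hij.trans hjk).le))
      rw [hother l hlj hlk]
      exact hbd l
    rcases hmax w' hbd' with heq | ⟨m, hpre, hlt⟩
    · rw [heq] at hwj
      exact hne (w.injective hwj)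
    · rcases lt_trichotomy m j with hmj | rfl | hmj
      · have hmk : m ≠ k := ne_of_lt (hmj.trans hjk)
        rw [hother m (ne_of_lt hmj) hmk] at hlt
        exact lt_irrefl _ hlt
      · rw [hwj] at hlt
        exact absurd hlt (not_lt.2 h1.le)
      · have := hpre j hmj
        rw [hwj] at this
        exact hne (w.injective this).symm
  · intro hav
    refine ⟨fun i => Finset.sup' (Finset.Iic i) ⟨i, Finset.mem_Iic.2 le_rfl⟩ w,
      ⟨?_, ?_⟩, ?_, ?_⟩
    · intro i
      by_contra hc
      push_neg at hc
      have hmem : ∀ j ∈ Finset.Iic i, w j ∈ Finset.Iio i := by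
        intro j hj
        exact Finset.mem_Iio.2 (lt_of_le_of_lt (Finset.le_sup' w hj) hc)
      have hcard := Finset.card_le_card_of_injOn w hmem
        (fun a _ b _ hab => w.injective hab)
      rw [Fin.card_Iic, Fin.card_Iio] at hcard
      omega
    · intro a b hab
      apply Finset.sup'_le
      intro j hj
      exact Finset.le_sup' w (Finset.mem_Iic.2 (le_trans (Finset.mem_Iic.1 hj) hab))
    · intro i
      exact Finset.le_sup' w (Finset.mem_Iic.2 le_rfl)
    · intro w' hb'
      by_cases heq : w' = w
      · exact Or.inl heq
      right
      have hne : (Finset.univ.filter fun i => w' i ≠ w i).Nonempty := by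
        by_contra hc
        rw [Finset.not_nonempty_iff_eq_empty, Finset.filter_eq_empty_iff] at hc
        apply heq
        apply Equiv.ext
        intro x
        exact not_not.1 (hc (Finset.mem_univ x))
      set i := Finset.min' _ hne with hi
      have hipre : ∀ l, l < i → w' l = w l := by
        intro l hl
        by_contra hcl
        have : l ∈ Finset.univ.filter fun i => w' i ≠ w i :=
          Finset.mem_filter.2 ⟨Finset.mem_univ l, hcl⟩
        exact absurd (Finset.min'_le _ l this) (not_le.2 hl)
      refine ⟨i, hipre, ?_⟩
      have hdi : w' i ≠ w i :=
        (Finset.mem_filter.1 (Finset.min'_mem _ hne)).2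
      rcases lt_or_gt_of_ne hdi with hlt | hgt
      · exact hlt
      exfalso
      obtain ⟨m, hm, hms⟩ := Finset.exists_mem_eq_sup'
        (⟨i, Finset.mem_Iic.2 le_rfl⟩ : (Finset.Iic i).Nonempty) w
      have hwile : w' i ≤ w m := le_of_le_of_eq (hb' i) hms
      have hmi : m < i := by
        rcases lt_or_eq_of_le (Finset.mem_Iic.1 hm) with h | h
        · exact h
        · exfalso; rw [h] at hwile
          exact absurd hwile (not_le.2 hgt)
      set k := w.symm (w' i) with hk
      have hwk : w k = w' i := w.apply_symm_apply _
      have hki : i < k := by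
        rcases lt_trichotomy k i with h | h | h
        · exfalso
          have := hipre k h
          rw [hwk] at this
          exact absurd (w'.injective this) (ne_of_lt h)
        · exfalso; rw [h] at hwk; exact hdi hwk.symm
        · exact h
      have hkm : w k < w m := by
        rcases lt_or_eq_of_le (hwk ▸ hwile) with h | h
        · exact h
        · exfalso
          have : k = m := w.injective h
          omega
      exact hav ⟨m, i, k, hmi, hki, by rw [hwk]; exact hgt, hkm⟩
end

section
/- The assignment h ↦ w_h is a bijection from the set of Hessenberg functions h : [n] → [n] to the set of 312-avoiding permutations in S_n; the inverse sends a 312-avoiding permutation w to the Hessenberg function h(i) = max{w(1), …, w(i), i}. -/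
namespace S3
variable {n : ℕ}

def greedy (h : Fin n → Fin n) (i : Fin n) : Fin n :=
  ((Finset.Iic (h i) \ (Finset.Iio i).attach.image fun j => greedy h j.1).max).unbotD i
termination_by i.val
decreasing_by exact Fin.lt_def.mp (Finset.mem_Iio.mp j.2)

def avail (h : Fin n → Fin n) (i : Fin n) : Finset (Fin n) :=
  Finset.Iic (h i) \ (Finset.Iio i).image (greedy h)

theorem greedy_eq (h : Fin n → Fin n) (i : Fin n) :
    greedy h i = ((avail h i).max).unbotD i := by
  rw [greedy, avail]
  congr 2
  ext v
  simp [Finset.mem_image]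

theorem avail_nonempty (h : Fin n → Fin n) (hh : ∀ i, i ≤ h i) (i : Fin n) :
    (avail h i).Nonempty := by
  rw [← Finset.card_pos]
  have h1 : (Finset.Iic (h i)).card = (h i : ℕ) + 1 := by simp [Fin.card_Iic]
  have h2 : ((Finset.Iio i).image (greedy h)).card ≤ (i : ℕ) := by
    calc ((Finset.Iio i).image (greedy h)).card ≤ (Finset.Iio i).card :=
          Finset.card_image_le
      _ = (i : ℕ) := by simp [Fin.card_Iio]
  have h3 := Finset.le_card_sdiff ((Finset.Iio i).image (greedy h)) (Finset.Iic (h i))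
  have h4 : (i : ℕ) ≤ (h i : ℕ) := Fin.le_def.mp (hh i)
  rw [avail]
  omega

theorem greedy_eq_max' (h : Fin n → Fin n) (hh : ∀ i, i ≤ h i) (i : Fin n) :
    greedy h i = (avail h i).max' (avail_nonempty h hh i) := by
  rw [greedy_eq, ← Finset.coe_max', WithBot.unbotD_coe]

theorem greedy_mem (h : Fin n → Fin n) (hh : ∀ i, i ≤ h i) (i : Fin n) :
    greedy h i ∈ avail h i := by
  rw [greedy_eq_max' h hh i]; exact Finset.max'_mem _ _

theorem le_greedy (h : Fin n → Fin n) (hh : ∀ i, i ≤ h i) {i v : Fin n}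
    (hv : v ∈ avail h i) : v ≤ greedy h i := by
  rw [greedy_eq_max' h hh i]; exact Finset.le_max' _ _ hv

theorem greedy_le (h : Fin n → Fin n) (hh : ∀ i, i ≤ h i) (i : Fin n) :
    greedy h i ≤ h i :=
  Finset.mem_Iic.mp (Finset.mem_sdiff.mp (greedy_mem h hh i)).1

theorem greedy_ne (h : Fin n → Fin n) (hh : ∀ i, i ≤ h i) {j i : Fin n} (hj : j < i) :
    greedy h j ≠ greedy h i := by
  intro hcon
  have := (Finset.mem_sdiff.mp (greedy_mem h hh i)).2
  exact this (Finset.mem_image.mpr ⟨j, Finset.mem_Iio.mpr hj, hcon⟩)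

theorem greedy_inj (h : Fin n → Fin n) (hh : ∀ i, i ≤ h i) :
    Function.Injective (greedy h) := by
  intro a b hab
  by_contra hne
  rcases lt_or_gt_of_ne hne with hl | hl
  · exact greedy_ne h hh hl hab
  · exact greedy_ne h hh hl hab.symm

noncomputable def gp (h : Fin n → Fin n) (hh : ∀ i, i ≤ h i) : Equiv.Perm (Fin n) :=
  Equiv.ofBijective (greedy h) (Finite.injective_iff_bijective.mp (greedy_inj h hh))

@[simp] theorem gp_apply (h : Fin n → Fin n) (hh : ∀ i, i ≤ h i) (i : Fin n) :
    gp h hh i = greedy h i := rfl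

/-- any bounded permutation is lex-≤ the greedy one -/
theorem greedy_isMaxFor (h : Fin n → Fin n) (hh : ∀ i, i ≤ h i) :
    IsMaxFor h (gp h hh) := by
  constructor
  · intro i; exact greedy_le h hh i
  · intro w' hw'
    by_cases heq : w' = gp h hh
    · exact Or.inl heq
    · right
      have hne : ∃ i, w' i ≠ greedy h i := by
        by_contra hc
        push_neg at hc
        exact heq (Equiv.ext fun i => hc i)
      classical
      let S := Finset.univ.filter (fun i => w' i ≠ greedy h i)
      have hSne : S.Nonempty := by
        obtain ⟨i, hi⟩ := hne
        exact ⟨i, by simp [S, hi]⟩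
      set i := S.min' hSne with hidef
      have hiS : w' i ≠ greedy h i := by
        have := S.min'_mem hSne
        simpa [S] using this
      have hpre : ∀ j, j < i → w' j = greedy h j := by
        intro j hji
        by_contra hc
        have : i ≤ j := S.min'_le j (by simp [S, hc])
        exact absurd hji (not_lt.mpr this)
      refine ⟨i, fun j hj => (hpre j hj).trans rfl, ?_⟩
      have hmem : w' i ∈ avail h i := by
        rw [avail, Finset.mem_sdiff]
        refine ⟨Finset.mem_Iic.mpr (hw' i), ?_⟩
        intro hc
        obtain ⟨j, hj, hje⟩ := Finset.mem_image.mp hc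
        rw [Finset.mem_Iio] at hj
        rw [← hpre j hj] at hje
        exact absurd (w'.injective hje) (ne_of_lt hj)
      exact lt_of_le_of_ne (le_greedy h hh hmem) hiS

theorem lex_antisymm {u v : Equiv.Perm (Fin n)} (h1 : LexLE u v) (h2 : LexLE v u) :
    u = v := by
  rcases h1 with h1 | ⟨i, hi1, hi2⟩
  · exact h1
  rcases h2 with h2 | ⟨j, hj1, hj2⟩
  · exact h2.symm
  rcases lt_trichotomy i j with hij | hij | hij
  · exact absurd (hj1 i hij ▸ hi2) (lt_irrefl _)
  · subst hij; exact absurd (hi2.trans hj2) (lt_irrefl _)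
  · exact absurd (hi1 j hij ▸ hj2) (lt_irrefl _)

theorem isMaxFor_unique {h : Fin n → Fin n} {u v : Equiv.Perm (Fin n)}
    (hu : IsMaxFor h u) (hv : IsMaxFor h v) : u = v :=
  lex_antisymm (hv.2 u hu.1) (hu.2 v hv.1)

theorem greedy_avoids (h : Fin n → Fin n) (hh : IsHessenberg h) :
    Avoids312 (gp h hh.1) := by
  rintro ⟨i, j, k, hij, hjk, h1, h2⟩
  simp only [gp_apply] at h1 h2
  have hmem : greedy h k ∈ avail h j := by
    rw [avail, Finset.mem_sdiff]
    constructor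
    · exact Finset.mem_Iic.mpr (le_trans (le_of_lt h2)
        (le_trans (greedy_le h hh.1 i) (hh.2 (le_of_lt hij))))
    · intro hc
      obtain ⟨l, hl, hle⟩ := Finset.mem_image.mp hc
      rw [Finset.mem_Iio] at hl
      have := greedy_inj h hh.1 hle
      subst this
      exact absurd hjk (not_lt.mpr (le_of_lt hl))
  exact absurd (le_greedy h hh.1 hmem) (not_le.mpr h1)

end S3

namespace S3
variable {n : ℕ}

theorem greedy_formula (h : Fin n → Fin n) (hh : IsHessenberg h) (i : Fin n) :
    (h i : ℕ) = max ((Finset.Iic i).sup fun j => (greedy h j : ℕ)) (i : ℕ) := by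
  apply le_antisymm
  · have hcase : (∃ j < i, greedy h j = h i) ∨ h i ≤ greedy h i := by
      by_cases hc : ∃ j < i, greedy h j = h i
      · obtain ⟨j, hj, hje⟩ := hc; exact Or.inl ⟨j, hj, hje⟩
      · right
        push_neg at hc
        apply le_greedy h hh.1
        rw [avail, Finset.mem_sdiff]
        refine ⟨Finset.mem_Iic.mpr le_rfl, ?_⟩
        intro hmem
        obtain ⟨j, hj, hje⟩ := Finset.mem_image.mp hmem
        exact hc j (Finset.mem_Iio.mp hj) hje
    rcases hcase with ⟨j, hj, hje⟩ | hgi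
    · calc (h i : ℕ) = (greedy h j : ℕ) := by rw [hje]
        _ ≤ (Finset.Iic i).sup (fun j => (greedy h j : ℕ)) :=
            Finset.le_sup (f := fun j => ((greedy h j : ℕ))) (Finset.mem_Iic.mpr (le_of_lt hj))
        _ ≤ _ := le_max_left _ _
    · calc (h i : ℕ) ≤ (greedy h i : ℕ) := Fin.le_def.mp hgi
        _ ≤ (Finset.Iic i).sup (fun j => (greedy h j : ℕ)) :=
            Finset.le_sup (f := fun j => ((greedy h j : ℕ))) (Finset.mem_Iic.mpr le_rfl)
        _ ≤ _ := le_max_left _ _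
  · apply max_le
    · apply Finset.sup_le
      intro j hj
      exact Fin.le_def.mp (le_trans (greedy_le h hh.1 j) (hh.2 (Finset.mem_Iic.mp hj)))
    · exact Fin.le_def.mp (hh.1 i)

/-- the candidate inverse Hessenberg function -/
def hFun (w : Equiv.Perm (Fin n)) (i : Fin n) : Fin n :=
  ⟨max ((Finset.Iic i).sup fun j => (w j : ℕ)) (i : ℕ), by
    have hn : 0 < n := i.pos
    apply max_lt _ i.isLt
    rw [Finset.sup_lt_iff (by simpa using hn : (⊥ : ℕ) < n)]
    intro j _
    exact (w j).isLt⟩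

@[simp] theorem hFun_val (w : Equiv.Perm (Fin n)) (i : Fin n) :
    (hFun w i : ℕ) = max ((Finset.Iic i).sup fun j => (w j : ℕ)) (i : ℕ) := rfl

theorem hFun_hess (w : Equiv.Perm (Fin n)) : IsHessenberg (hFun w) := by
  constructor
  · intro i
    rw [Fin.le_def, hFun_val]
    exact le_max_right _ _
  · intro a b hab
    rw [Fin.le_def, hFun_val, hFun_val]
    apply max_le
    · apply le_trans _ (le_max_left _ _)
      apply Finset.sup_le
      intro j hj
      exact Finset.le_sup (f := fun j => ((w j : ℕ)))
        (Finset.mem_Iic.mpr (le_trans (Finset.mem_Iic.mp hj) hab))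
    · exact le_trans (Fin.le_def.mp hab) (le_max_right _ _)

theorem w_le_hFun (w : Equiv.Perm (Fin n)) (i : Fin n) : w i ≤ hFun w i := by
  rw [Fin.le_def, hFun_val]
  exact le_trans (Finset.le_sup (f := fun j => ((w j : ℕ))) (Finset.mem_Iic.mpr le_rfl))
    (le_max_left _ _)

theorem w_eq_greedy (w : Equiv.Perm (Fin n)) (hw : Avoids312 w) (i : Fin n) :
    w i = greedy (hFun w) i := by
  suffices H : ∀ m : ℕ, ∀ i : Fin n, (i : ℕ) < m → w i = greedy (hFun w) i from
    H n i i.isLt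
  intro m
  induction m with
  | zero => intro i h; omega
  | succ m IHm =>
  intro i him
  have IH : ∀ j : Fin n, j < i → w j = greedy (hFun w) j := fun j hj =>
    IHm j (by have := Fin.lt_def.mp hj; omega)
  set h := hFun w with hdef
  have hh1 : ∀ i, i ≤ h i := (hFun_hess w).1
  -- w i is available
  have hwmem : w i ∈ avail h i := by
    rw [avail, Finset.mem_sdiff]
    refine ⟨Finset.mem_Iic.mpr (w_le_hFun w i), ?_⟩
    intro hmem
    obtain ⟨j, hj, hje⟩ := Finset.mem_image.mp hmem
    rw [Finset.mem_Iio] at hj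
    rw [← IH j hj] at hje
    exact absurd (w.injective hje) (ne_of_lt hj)
  have h1 : w i ≤ greedy h i := le_greedy h hh1 hwmem
  -- conversely
  have h2 : greedy h i ≤ w i := by
    set v := greedy h i with hvdef
    have hvmem := greedy_mem h hh1 i
    rw [avail, Finset.mem_sdiff] at hvmem
    set k := w.symm v with hkdef
    have hwk : w k = v := w.apply_symm_apply v
    have hik : i ≤ k := by
      by_contra hc
      push_neg at hc
      apply hvmem.2
      apply Finset.mem_image.mpr
      exact ⟨k, Finset.mem_Iio.mpr hc, by rw [← IH k hc, hwk]⟩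
    rcases eq_or_lt_of_le hik with heq | hlt
    · rw [← hwk, ← heq]
    by_contra hc
    push_neg at hc
    -- hc : w i < v, hlt : i < k, w k = v
    have hvle : (v : ℕ) ≤ max ((Finset.Iic i).sup fun j => (w j : ℕ)) (i : ℕ) := by
      have := Finset.mem_Iic.mp hvmem.1
      rw [Fin.le_def] at this
      simpa [hdef] using this
    rcases max_cases ((Finset.Iic i).sup fun j => (w j : ℕ)) (i : ℕ) with ⟨hm, _⟩ | ⟨hm, hsupi⟩
    · -- v ≤ sup
      rw [hm] at hvle
      obtain ⟨j, hjmem, hje⟩ := Finset.exists_mem_eq_sup (Finset.Iic i)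
        ⟨i, Finset.mem_Iic.mpr le_rfl⟩ (fun j => ((w j : ℕ)))
      rw [hje] at hvle
      have hvwj : v ≤ w j := Fin.le_def.mpr hvle
      have hji : j < i := by
        rcases lt_or_eq_of_le (Finset.mem_Iic.mp hjmem) with hji | hji
        · exact hji
        · subst hji; exact absurd hvwj (not_le.mpr hc)
      have hvne : v ≠ w j := by
        intro hcon
        have : k = j := by rw [hkdef, hcon]; exact w.symm_apply_apply j
        omega
      exact hw ⟨j, i, k, hji, hlt, by rw [hwk]; exact hc, by rw [hwk]; exact lt_of_le_of_ne hvwj hvne⟩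
    · -- sup < v would follow; here max = i, and sup ≤ i; pigeonhole
      rw [hm] at hvle
      -- all w j for j ≤ i are < v? We know sup ≤ i but need sup < v.
      by_cases hvs : (v : ℕ) ≤ (Finset.Iic i).sup fun j => (w j : ℕ)
      · obtain ⟨j, hjmem, hje⟩ := Finset.exists_mem_eq_sup (Finset.Iic i)
          ⟨i, Finset.mem_Iic.mpr le_rfl⟩ (fun j => ((w j : ℕ)))
        rw [hje] at hvs
        have hvwj : v ≤ w j := Fin.le_def.mpr hvs
        have hji : j < i := by
          rcases lt_or_eq_of_le (Finset.mem_Iic.mp hjmem) with hji | hji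
          · exact hji
          · subst hji; exact absurd hvwj (not_le.mpr hc)
        have hvne : v ≠ w j := by
          intro hcon
          have : k = j := by rw [hkdef, hcon]; exact w.symm_apply_apply j
          omega
        exact hw ⟨j, i, k, hji, hlt, by rw [hwk]; exact hc, by rw [hwk]; exact lt_of_le_of_ne hvwj hvne⟩
      · push_neg at hvs
        -- pigeonhole: (Iic i).image w ⊆ Iio v, card i+1 ≤ v ≤ i
        have hsub : (Finset.Iic i).image w ⊆ Finset.Iio v := by
          intro u hu
          obtain ⟨j, hjmem, hje⟩ := Finset.mem_image.mp hu
          rw [Finset.mem_Iio, ← hje, Fin.lt_def]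
          exact lt_of_le_of_lt (Finset.le_sup (f := fun j => ((w j : ℕ))) hjmem) hvs
        have hcard := Finset.card_le_card hsub
        rw [Finset.card_image_of_injective _ w.injective] at hcard
        simp [Fin.card_Iic, Fin.card_Iio] at hcard
        omega
  exact le_antisymm h1 h2

end S3

theorem stmt3c {n : ℕ} (h : Fin n → Fin n) (w : Equiv.Perm (Fin n))
    (hh : IsHessenberg h) (hmax : IsMaxFor h w) (i : Fin n) :
    (h i : ℕ) = max (((Finset.Iic i).sup fun j => (w j : ℕ))) (i : ℕ) := by
  have hwe : w = S3.gp h hh.1 := S3.isMaxFor_unique hmax (S3.greedy_isMaxFor h hh.1)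
  rw [hwe]
  exact S3.greedy_formula h hh i


/-- `h ↦ w_h` is a bijection from Hessenberg functions to 312-avoiding
permutations, with inverse `w ↦ (i ↦ max {w 1, …, w i, i})`. -/
theorem stmt3 (n : ℕ) :
    (∀ h : Fin n → Fin n, IsHessenberg h → ∃ w, IsMaxFor h w ∧ Avoids312 w) ∧
    (∀ w : Equiv.Perm (Fin n), Avoids312 w →
      ∃! h : Fin n → Fin n, IsHessenberg h ∧ IsMaxFor h w) ∧
    (∀ (h : Fin n → Fin n) (w : Equiv.Perm (Fin n)), IsHessenberg h → IsMaxFor h w →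
      ∀ i : Fin n, (h i : ℕ) = max (((Finset.Iic i).sup fun j => (w j : ℕ))) (i : ℕ)) := by
  refine ⟨?_, ?_, fun h w hh hmax i => stmt3c h w hh hmax i⟩
  · intro h hh
    exact ⟨S3.gp h hh.1, S3.greedy_isMaxFor h hh.1, S3.greedy_avoids h hh⟩
  · intro w hw
    refine ⟨S3.hFun w, ⟨S3.hFun_hess w, ?_⟩, ?_⟩
    · have hwe : w = S3.gp (S3.hFun w) (S3.hFun_hess w).1 :=
        Equiv.ext fun i => S3.w_eq_greedy w hw i
      nth_rewrite 2 [hwe]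
      exact S3.greedy_isMaxFor _ _
    · rintro h' ⟨hh', hmax'⟩
      funext i
      apply Fin.ext
      rw [stmt3c h' w hh' hmax' i, S3.hFun_val]
end

section
/- Let h : [n] → [n] be a Hessenberg function and w_h the corresponding codominant (312-avoiding) permutation. Then for every pair i < j with j ≤ h(i), the transposition (i, j) is less than or equal to w_h in the Bruhat order on S_n. -/
namespace S7

variable {n : ℕ}

/-! ### Inversions and the length lemma -/

/-- inversion set -/
def Inv (x : Equiv.Perm (Fin n)) : Finset (Fin n × Fin n) :=
  Finset.univ.filter fun p : Fin n × Fin n => p.1 < p.2 ∧ x p.2 < x p.1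

lemma lengthPerm_eq (x : Equiv.Perm (Fin n)) : lengthPerm x = (Inv x).card := rfl

lemma mem_Inv {x : Equiv.Perm (Fin n)} {p : Fin n × Fin n} :
    p ∈ Inv x ↔ p.1 < p.2 ∧ x p.2 < x p.1 := by
  simp [Inv]

lemma length_mul_swap_lt (x : Equiv.Perm (Fin n)) (i j : Fin n) (hij : i < j)
    (hxij : x i < x j) : lengthPerm x < lengthPerm (x * Equiv.swap i j) := by
  classical
  set σ := Equiv.swap i j with hσ
  set x' := x * σ with hx'def
  have hx' : ∀ a, x' a = x (σ a) := fun a => rfl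
  have hσσ : ∀ a, σ (σ a) = a := fun a => Equiv.swap_apply_self i j a
  have hσi : σ i = j := Equiv.swap_apply_left i j
  have hσj : σ j = i := Equiv.swap_apply_right i j
  have hσo : ∀ a, a ≠ i → a ≠ j → σ a = a := fun a h1 h2 =>
    Equiv.swap_apply_of_ne_of_ne h1 h2
  set φ : Fin n × Fin n → Fin n × Fin n := fun p =>
    if (p.1 = i ∧ p.2 < j) ∨ (p.2 = j ∧ i < p.1) then p else (σ p.1, σ p.2) with hφ
  -- φ maps Inv x into Inv x', avoiding (i,j)
  have hmap : ∀ p ∈ Inv x, φ p ∈ Inv x' ∧ φ p ≠ (i, j) := by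
    rintro ⟨a, b⟩ hp
    rw [mem_Inv] at hp
    obtain ⟨hab, hinv⟩ := hp
    by_cases hM : (a = i ∧ b < j) ∨ (b = j ∧ i < a)
    · have : φ (a, b) = (a, b) := by simp only [hφ]; exact if_pos hM
      rw [this]
      rcases hM with ⟨hai, hbj⟩ | ⟨hbj, hia⟩
      · -- a = i, b < j
        have hbi : i < b := hai ▸ hab
        have hb : σ b = b := hσo b (ne_of_gt hbi) (ne_of_lt hbj)
        refine ⟨?_, ?_⟩
        · rw [mem_Inv]
          refine ⟨hab, ?_⟩
          show x (σ b) < x (σ a)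
          rw [hb, hai, hσi]
          have : x b < x i := hai ▸ hinv
          exact lt_trans this hxij
        · simp only [ne_eq, Prod.mk.injEq]
          rintro ⟨-, hbj'⟩; rw [hbj'] at hbj; exact lt_irrefl _ hbj
      · -- b = j, i < a
        have haj : a < j := hbj ▸ hab
        have ha : σ a = a := hσo a (ne_of_gt hia) (ne_of_lt haj)
        refine ⟨?_, ?_⟩
        · rw [mem_Inv]
          refine ⟨hab, ?_⟩
          show x (σ b) < x (σ a)
          rw [ha, hbj, hσj]
          have : x j < x a := hbj ▸ hinv
          exact lt_trans hxij this
        · simp only [ne_eq, Prod.mk.injEq]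
          rintro ⟨hai', -⟩; rw [hai'] at hia; exact lt_irrefl _ hia
    · have hφp : φ (a, b) = (σ a, σ b) := by simp only [hφ]; exact if_neg hM
      rw [hφp]
      push_neg at hM
      obtain ⟨hM1, hM2⟩ := hM
      have hsort : σ a < σ b := by
        by_cases hai : a = i
        · by_cases hbj : b = j
          · exact absurd hxij (not_lt_of_gt (hai ▸ hbj ▸ hinv))
          · have hbj' : j < b := lt_of_le_of_ne (hM1 hai) (fun hh => hbj hh.symm)
            rw [hai, hσi, hσo b (ne_of_gt (lt_trans hij hbj')) hbj]
            exact hbj'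
        · by_cases hbj : b = j
          · have hai' : a < i := lt_of_le_of_ne (hM2 hbj) hai
            rw [hbj, hσj, hσo a hai (hbj ▸ ne_of_lt hab)]
            exact hai'
          · by_cases hbi : b = i
            · have hab' : a < i := hbi ▸ hab
              rw [hbi, hσi, hσo a hai (ne_of_lt (lt_trans hab' hij))]
              exact lt_trans hab' hij
            · by_cases haj : a = j
              · have : j < b := lt_of_le_of_ne (le_of_lt (haj ▸ hab)) (fun hh => hbj hh.symm)
                rw [haj, hσj, hσo b hbi hbj]
                exact lt_trans hij this
              · rw [hσo a hai haj, hσo b hbi hbj]; exact hab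
      refine ⟨?_, ?_⟩
      · rw [mem_Inv]
        refine ⟨hsort, ?_⟩
        show x (σ (σ b)) < x (σ (σ a))
        rw [hσσ, hσσ]; exact hinv
      · simp only [ne_eq, Prod.mk.injEq]
        rintro ⟨h1, h2⟩
        have ha : a = j := by rw [← hσσ a, h1, hσi]
        have hb : b = i := by rw [← hσσ b, h2, hσj]
        rw [ha, hb] at hab
        exact absurd hab (not_lt_of_gt hij)
  -- φ is involutive on sorted pairs
  have hinvol : ∀ p : Fin n × Fin n, p.1 < p.2 → φ (φ p) = p := by
    rintro ⟨a, b⟩ hab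
    by_cases hM : (a = i ∧ b < j) ∨ (b = j ∧ i < a)
    · have h1 : φ (a, b) = (a, b) := by simp only [hφ]; exact if_pos hM
      rw [h1, h1]
    · have h1 : φ (a, b) = (σ a, σ b) := by simp only [hφ]; exact if_neg hM
      rw [h1]
      have hM' : ¬ ((σ a = i ∧ σ b < j) ∨ (σ b = j ∧ i < σ a)) := by
        push_neg at hM
        obtain ⟨hM1, hM2⟩ := hM
        push_neg
        constructor
        · intro hsai
          have ha : a = j := by rw [← hσσ a, hsai, hσi]
          by_cases hbi : b = i
          · exact absurd (lt_trans (ha ▸ hbi ▸ hab) hij) (lt_irrefl _)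
          · by_cases hbj : b = j
            · exact absurd (ha ▸ hbj ▸ hab) (lt_irrefl _)
            · rw [hσo b hbi hbj]
              exact le_of_lt (ha ▸ hab)
        · intro hsbj
          have hb : b = i := by rw [← hσσ b, hsbj, hσj]
          by_cases hai : a = i
          · exact absurd (hai ▸ hb ▸ hab) (lt_irrefl _)
          · by_cases haj : a = j
            · exact absurd (lt_trans hij (haj ▸ hb ▸ hab)) (lt_irrefl _)
            · rw [hσo a hai haj]
              exact le_of_lt (hb ▸ hab)
      have h2 : φ (σ a, σ b) = (σ (σ a), σ (σ b)) := by simp only [hφ]; exact if_neg hM'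
      rw [h2, hσσ, hσσ]
  -- (i,j) ∈ Inv x'
  have hij' : (i, j) ∈ Inv x' := by
    rw [mem_Inv]
    refine ⟨hij, ?_⟩
    show x (σ j) < x (σ i)
    rw [hσi, hσj]; exact hxij
  -- conclude
  have hinj : Set.InjOn φ (Inv x) := by
    intro p hp q hq hpq
    have hp' := (mem_Inv.mp hp).1
    have hq' := (mem_Inv.mp hq).1
    calc p = φ (φ p) := (hinvol p hp').symm
    _ = φ (φ q) := by rw [hpq]
    _ = q := hinvol q hq'
  have hsub : (Inv x).image φ ⊆ (Inv x').erase (i, j) := by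
    intro p hp
    rw [Finset.mem_image] at hp
    obtain ⟨q, hq, rfl⟩ := hp
    obtain ⟨h1, h2⟩ := hmap q hq
    exact Finset.mem_erase.mpr ⟨h2, h1⟩
  rw [lengthPerm_eq, lengthPerm_eq]
  calc (Inv x).card = ((Inv x).image φ).card := (Finset.card_image_of_injOn hinj).symm
  _ ≤ ((Inv x').erase (i, j)).card := Finset.card_le_card hsub
  _ < (Inv x').card := Finset.card_erase_lt_of_mem hij'


/-! ### Rank counts and dominance -/

/-- number of positions `a ≤ p` with value `≥ q` -/
def NB (x : Equiv.Perm (Fin n)) (p : Fin n) (q : ℕ) : ℕ :=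
  (Finset.univ.filter fun a => a ≤ p ∧ q ≤ (x a : ℕ)).card

def Dom (w x : Equiv.Perm (Fin n)) : Prop := ∀ p q, NB x p q ≤ NB w p q

/-- if both i and j are ≤ p then right-multiplying by the swap doesn't change NB -/
lemma NB_mul_swap_le (x : Equiv.Perm (Fin n)) (i j p : Fin n) (hi : i ≤ p) (hj : j ≤ p)
    (q : ℕ) : NB (x * Equiv.swap i j) p q = NB x p q := by
  unfold NB
  apply Finset.card_bij' (fun a _ => Equiv.swap i j a) (fun a _ => Equiv.swap i j a)
  · intro a ha
    simp only [Finset.mem_filter, Finset.mem_univ, true_and] at ha ⊢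
    constructor
    · rcases Equiv.swap_apply_def i j a ▸ (rfl : Equiv.swap i j a = Equiv.swap i j a) with _
      by_cases h1 : a = i
      · rw [h1, Equiv.swap_apply_left]; exact hj
      · by_cases h2 : a = j
        · rw [h2, Equiv.swap_apply_right]; exact hi
        · rw [Equiv.swap_apply_of_ne_of_ne h1 h2]; exact ha.1
    · have : (x * Equiv.swap i j) a = x (Equiv.swap i j a) := rfl
      rw [← this]; exact ha.2
  · intro a ha
    simp only [Finset.mem_filter, Finset.mem_univ, true_and] at ha ⊢
    constructor
    · by_cases h1 : a = i
      · rw [h1, Equiv.swap_apply_left]; exact hj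
      · by_cases h2 : a = j
        · rw [h2, Equiv.swap_apply_right]; exact hi
        · rw [Equiv.swap_apply_of_ne_of_ne h1 h2]; exact ha.1
    · show q ≤ ((x * Equiv.swap i j) (Equiv.swap i j a) : ℕ)
      have : (x * Equiv.swap i j) (Equiv.swap i j a) = x a := by
        show x (Equiv.swap i j (Equiv.swap i j a)) = x a
        rw [Equiv.swap_apply_self]
      rw [this]; exact ha.2
  · intro a _; exact Equiv.swap_apply_self i j a
  · intro a _; exact Equiv.swap_apply_self i j a

section DomStep

variable (w x : Equiv.Perm (Fin n)) (i j p : Fin n)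

private def Lf (z : Equiv.Perm (Fin n)) (i : Fin n) (r : ℕ) : Finset (Fin n) :=
  Finset.univ.filter fun a => a < i ∧ r ≤ (z a : ℕ)

private def Gf (z : Equiv.Perm (Fin n)) (i p : Fin n) (r : ℕ) : Finset (Fin n) :=
  Finset.univ.filter fun a => i < a ∧ a ≤ p ∧ r ≤ (z a : ℕ)

lemma NB_split (z : Equiv.Perm (Fin n)) (i p : Fin n) (r : ℕ) (hip : i ≤ p)
    (hzi : (z i : ℕ) < r) :
    NB z p r = (Lf z i r).card + (Gf z i p r).card := by
  classical
  have hdisj : Disjoint (Lf z i r) (Gf z i p r) := by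
    rw [Finset.disjoint_left]
    intro a ha hb
    simp only [Lf, Gf, Finset.mem_filter, Finset.mem_univ, true_and] at ha hb
    exact absurd (lt_trans ha.1 hb.1) (lt_irrefl a)
  rw [← Finset.card_union_of_disjoint hdisj]
  unfold NB
  congr 1
  ext a
  simp only [Lf, Gf, Finset.mem_filter, Finset.mem_univ, true_and, Finset.mem_union]
  constructor
  · rintro ⟨h1, h2⟩
    rcases lt_trichotomy a i with h | h | h
    · exact Or.inl ⟨h, h2⟩
    · rw [h] at h2; omega
    · exact Or.inr ⟨h, h1, h2⟩
  · rintro (⟨h1, h2⟩ | ⟨h1, h2, h3⟩)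
    · exact ⟨le_of_lt (lt_of_lt_of_le h1 hip), h2⟩
    · exact ⟨h2, h3⟩

lemma NB_split' (z : Equiv.Perm (Fin n)) (i p : Fin n) (r : ℕ) (hip : i ≤ p)
    (hzi : r ≤ (z i : ℕ)) :
    NB z p r = (Lf z i r).card + (Gf z i p r).card + 1 := by
  classical
  have hdisj : Disjoint (Lf z i r) (Gf z i p r) := by
    rw [Finset.disjoint_left]
    intro a ha hb
    simp only [Lf, Gf, Finset.mem_filter, Finset.mem_univ, true_and] at ha hb
    exact absurd (lt_trans ha.1 hb.1) (lt_irrefl a)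
  have hnotmem : i ∉ Lf z i r ∪ Gf z i p r := by
    simp only [Lf, Gf, Finset.mem_union, Finset.mem_filter, Finset.mem_univ, true_and]
    rintro (⟨h1, -⟩ | ⟨h1, -⟩) <;> exact absurd h1 (lt_irrefl i)
  have : NB z p r = (insert i (Lf z i r ∪ Gf z i p r)).card := by
    unfold NB
    congr 1
    ext a
    simp only [Lf, Gf, Finset.mem_filter, Finset.mem_univ, true_and, Finset.mem_union,
      Finset.mem_insert]
    constructor
    · rintro ⟨h1, h2⟩
      rcases lt_trichotomy a i with h | h | h
      · exact Or.inr (Or.inl ⟨h, h2⟩)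
      · exact Or.inl h
      · exact Or.inr (Or.inr ⟨h, h1, h2⟩)
    · rintro (rfl | ⟨h1, h2⟩ | ⟨h1, h2, h3⟩)
      · exact ⟨hip, hzi⟩
      · exact ⟨le_of_lt (lt_of_lt_of_le h1 hip), h2⟩
      · exact ⟨h2, h3⟩
  rw [this, Finset.card_insert_of_notMem hnotmem, Finset.card_union_of_disjoint hdisj]

lemma dom_step (hd : Dom w x)
    (hagree : ∀ a, a < i → x a = w a) (hij : i < j) (hxij : (x i : ℕ) < (x j : ℕ))
    (hjw : (x j : ℕ) ≤ (w i : ℕ))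
    (hmin : ∀ a, i < a → a < j → (x i : ℕ) < (x a : ℕ) → (w i : ℕ) < (x a : ℕ)) :
    Dom w (x * Equiv.swap i j) := by
  classical
  intro p q
  set x' := x * Equiv.swap i j with hx'def
  have hx'i : x' i = x j := by
    show x (Equiv.swap i j i) = x j
    rw [Equiv.swap_apply_left]
  have hx'o : ∀ a, a ≠ i → a ≠ j → x' a = x a := by
    intro a h1 h2
    show x (Equiv.swap i j a) = x a
    rw [Equiv.swap_apply_of_ne_of_ne h1 h2]
  by_cases hpi : p < i
  · have : NB x' p q = NB x p q := by
      unfold NB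
      congr 1
      apply Finset.filter_congr
      intro a _
      constructor
      · rintro ⟨h1, h2⟩
        refine ⟨h1, ?_⟩
        rwa [← hx'o a (ne_of_lt (lt_of_le_of_lt h1 hpi))
          (ne_of_lt (lt_of_le_of_lt h1 (lt_trans hpi hij)))]
      · rintro ⟨h1, h2⟩
        refine ⟨h1, ?_⟩
        rwa [hx'o a (ne_of_lt (lt_of_le_of_lt h1 hpi))
          (ne_of_lt (lt_of_le_of_lt h1 (lt_trans hpi hij)))]
    rw [this]; exact hd p q
  by_cases hpj : j ≤ p
  · have : NB x' p q = NB x p q := by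
      unfold NB x'
      apply Finset.card_bij' (fun a _ => Equiv.swap i j a) (fun a _ => Equiv.swap i j a)
      · intro a ha
        simp only [Finset.mem_filter, Finset.mem_univ, true_and] at ha ⊢
        refine ⟨?_, ha.2⟩
        by_cases h1 : a = i
        · rw [h1, Equiv.swap_apply_left]; exact hpj
        · by_cases h2 : a = j
          · rw [h2, Equiv.swap_apply_right]; exact le_trans (le_of_lt hij) hpj
          · rw [Equiv.swap_apply_of_ne_of_ne h1 h2]; exact ha.1
      · intro a ha
        simp only [Finset.mem_filter, Finset.mem_univ, true_and] at ha ⊢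
        constructor
        · by_cases h1 : a = i
          · rw [h1, Equiv.swap_apply_left]; exact hpj
          · by_cases h2 : a = j
            · rw [h2, Equiv.swap_apply_right]; exact le_trans (le_of_lt hij) hpj
            · rw [Equiv.swap_apply_of_ne_of_ne h1 h2]; exact ha.1
        · show q ≤ ((x * Equiv.swap i j) (Equiv.swap i j a) : ℕ)
          have : (x * Equiv.swap i j) (Equiv.swap i j a) = x a := by
            show x (Equiv.swap i j (Equiv.swap i j a)) = x a
            rw [Equiv.swap_apply_self]
          rw [this]; exact ha.2
      · intro a _; exact Equiv.swap_apply_self i j a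
      · intro a _; exact Equiv.swap_apply_self i j a
    rw [this]; exact hd p q
  -- middle case: i ≤ p < j
  have hip : i ≤ p := not_lt.mp hpi
  have hpj' : p < j := not_le.mp hpj
  have hne_j : ∀ a : Fin n, a ≤ p → a ≠ j := fun a ha => ne_of_lt (lt_of_le_of_lt ha hpj')
  by_cases hq1 : q ≤ (x i : ℕ)
  · have : NB x' p q = NB x p q := by
      unfold NB
      congr 1
      apply Finset.filter_congr
      intro a _
      constructor
      · rintro ⟨h1, h2⟩
        refine ⟨h1, ?_⟩
        by_cases hai : a = i
        · rw [hai]; exact hq1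
        · rwa [← hx'o a hai (hne_j a h1)]
      · rintro ⟨h1, h2⟩
        refine ⟨h1, ?_⟩
        by_cases hai : a = i
        · rw [hai, hx'i]; exact le_trans hq1 (le_of_lt hxij)
        · rwa [hx'o a hai (hne_j a h1)]
    rw [this]; exact hd p q
  by_cases hq2 : (x j : ℕ) < q
  · have : NB x' p q = NB x p q := by
      unfold NB
      congr 1
      apply Finset.filter_congr
      intro a _
      constructor
      · rintro ⟨h1, h2⟩
        refine ⟨h1, ?_⟩
        by_cases hai : a = i
        · exfalso; rw [hai, hx'i] at h2; omega
        · rwa [← hx'o a hai (hne_j a h1)]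
      · rintro ⟨h1, h2⟩
        refine ⟨h1, ?_⟩
        by_cases hai : a = i
        · exfalso; rw [hai] at h2; omega
        · rwa [hx'o a hai (hne_j a h1)]
    rw [this]; exact hd p q
  -- now  x i < q ≤ x j
  push_neg at hq1 hq2
  have hqwi : q ≤ (w i : ℕ) := le_trans hq2 hjw
  -- NB x' p q = NB x p q + 1
  have hstep : NB x' p q = NB x p q + 1 := by
    have hset : (Finset.univ.filter fun a => a ≤ p ∧ q ≤ (x' a : ℕ)) =
        insert i (Finset.univ.filter fun a => a ≤ p ∧ q ≤ (x a : ℕ)) := by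
      ext a
      simp only [Finset.mem_filter, Finset.mem_univ, true_and, Finset.mem_insert]
      constructor
      · rintro ⟨h1, h2⟩
        by_cases hai : a = i
        · exact Or.inl hai
        · exact Or.inr ⟨h1, by rwa [← hx'o a hai (hne_j a h1)]⟩
      · rintro (rfl | ⟨h1, h2⟩)
        · exact ⟨hip, by rw [hx'i]; exact hq2⟩
        · refine ⟨h1, ?_⟩
          by_cases hai : a = i
          · exfalso; rw [hai] at h2; omega
          · rwa [hx'o a hai (hne_j a h1)]
    have hnm : i ∉ (Finset.univ.filter fun a => a ≤ p ∧ q ≤ (x a : ℕ)) := by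
      simp only [Finset.mem_filter, Finset.mem_univ, true_and]
      rintro ⟨-, h2⟩; omega
    unfold NB
    rw [hset, Finset.card_insert_of_notMem hnm]
  rw [hstep]
  -- strict inequality NB x p q < NB w p q
  have hLeq : ∀ r : ℕ, Lf x i r = Lf w i r := by
    intro r
    unfold Lf
    apply Finset.filter_congr
    intro a _
    constructor
    · rintro ⟨h1, h2⟩; exact ⟨h1, by rwa [← hagree a h1]⟩
    · rintro ⟨h1, h2⟩; exact ⟨h1, by rwa [hagree a h1]⟩
  have hGq : Gf x i p q = Gf x i p ((w i : ℕ) + 1) := by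
    unfold Gf
    apply Finset.filter_congr
    intro a _
    constructor
    · rintro ⟨h1, h2, h3⟩
      refine ⟨h1, h2, ?_⟩
      have := hmin a h1 (lt_of_le_of_lt h2 hpj') (by omega)
      omega
    · rintro ⟨h1, h2, h3⟩
      exact ⟨h1, h2, by omega⟩
  have hGle : (Gf x i p ((w i : ℕ) + 1)).card ≤ (Gf w i p ((w i : ℕ) + 1)).card := by
    have h1 := hd p ((w i : ℕ) + 1)
    rw [NB_split x i p _ hip (by omega), NB_split w i p _ hip (by omega)] at h1
    rw [hLeq] at h1
    omega
  have hGsub : Gf w i p ((w i : ℕ) + 1) ⊆ Gf w i p q := by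
    intro a ha
    simp only [Gf, Finset.mem_filter, Finset.mem_univ, true_and] at ha ⊢
    exact ⟨ha.1, ha.2.1, by omega⟩
  have h2 : NB x p q = (Lf w i q).card + (Gf x i p q).card := by
    rw [NB_split x i p q hip (by omega), hLeq]
  have h3 : NB w p q = (Lf w i q).card + (Gf w i p q).card + 1 :=
    NB_split' w i p q hip hqwi
  rw [h2, h3, hGq]
  have := Finset.card_le_card hGsub
  omega

end DomStep


/-! ### Counting helpers -/

lemma card_Iic_filter (p : Fin n) :
    (Finset.univ.filter fun a : Fin n => a ≤ p).card = (p : ℕ) + 1 := by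
  rw [show (Finset.univ.filter fun a : Fin n => a ≤ p) = Finset.Iic p by
    ext a; simp only [Finset.mem_filter, Finset.mem_univ, true_and, Finset.mem_Iic]]
  exact Fin.card_Iic p

lemma card_Ioc_filter (b p : Fin n) :
    (Finset.univ.filter fun a : Fin n => (b:ℕ) < (a:ℕ) ∧ (a:ℕ) ≤ (p:ℕ)).card
      = (p:ℕ) - (b:ℕ) := by
  rw [show (Finset.univ.filter fun a : Fin n => (b:ℕ) < (a:ℕ) ∧ (a:ℕ) ≤ (p:ℕ))
      = Finset.Ioc b p by
    ext a
    simp only [Finset.mem_filter, Finset.mem_univ, true_and, Finset.mem_Ioc, Fin.lt_def,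
      Fin.le_def]]
  exact Fin.card_Ioc b p

/-- values `< q` occupy at most `q` positions -/
lemma card_lt_le (z : Equiv.Perm (Fin n)) (p : Fin n) (q : ℕ) :
    (Finset.univ.filter fun a => a ≤ p ∧ (z a : ℕ) < q).card ≤ q := by
  classical
  have hinj : Set.InjOn (fun a => (z a : ℕ))
      ↑(Finset.univ.filter fun a => a ≤ p ∧ (z a : ℕ) < q) := by
    intro a _ b _ hab
    exact z.injective (Fin.val_injective hab)
  calc (Finset.univ.filter fun a => a ≤ p ∧ (z a : ℕ) < q).card
      = ((Finset.univ.filter fun a => a ≤ p ∧ (z a : ℕ) < q).image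
          fun a => (z a : ℕ)).card := (Finset.card_image_of_injOn hinj).symm
    _ ≤ (Finset.range q).card := by
        apply Finset.card_le_card
        intro v hv
        simp only [Finset.mem_image, Finset.mem_filter, Finset.mem_univ, true_and] at hv
        obtain ⟨a, ⟨-, ha⟩, rfl⟩ := hv
        exact Finset.mem_range.mpr ha
    _ = q := Finset.card_range q

lemma NB_compl (z : Equiv.Perm (Fin n)) (p : Fin n) (q : ℕ) :
    NB z p q + (Finset.univ.filter fun a => a ≤ p ∧ (z a : ℕ) < q).card = (p : ℕ) + 1 := by
  classical
  have hdisj : Disjoint (Finset.univ.filter fun a => a ≤ p ∧ q ≤ (z a : ℕ))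
      (Finset.univ.filter fun a => a ≤ p ∧ (z a : ℕ) < q) := by
    rw [Finset.disjoint_left]
    intro a ha hb
    simp only [Finset.mem_filter, Finset.mem_univ, true_and] at ha hb
    omega
  rw [NB, ← Finset.card_union_of_disjoint hdisj, ← card_Iic_filter p]
  congr 1
  ext a
  simp only [Finset.mem_union, Finset.mem_filter, Finset.mem_univ, true_and]
  constructor
  · rintro (⟨h1, -⟩ | ⟨h1, -⟩) <;> exact h1
  · intro h1
    by_cases h2 : q ≤ (z a : ℕ)
    · exact Or.inl ⟨h1, h2⟩
    · exact Or.inr ⟨h1, by omega⟩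



/-- the part of `Iic p` taken by small values of the identity, when `q ≤ p+1`,
has at least `q` elements -/
lemma card_id_lt_ge (p : Fin n) (q : ℕ) (hqp : q ≤ (p:ℕ) + 1) :
    q ≤ (Finset.univ.filter fun a : Fin n => a ≤ p ∧ (a : ℕ) < q).card := by
  classical
  have hsub : Finset.range q ⊆
      (Finset.univ.filter fun a : Fin n => a ≤ p ∧ (a : ℕ) < q).image
        fun a : Fin n => (a : ℕ) := by
    intro v hv
    rw [Finset.mem_range] at hv
    have hvn : v < n := by
      have : (p : ℕ) < n := p.isLt
      omega
    refine Finset.mem_image.mpr ⟨⟨v, hvn⟩, ?_, rfl⟩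
    simp only [Finset.mem_filter, Finset.mem_univ, true_and]
    refine ⟨Fin.le_def.mpr ?_, hv⟩
    simp only
    omega
  calc q = (Finset.range q).card := (Finset.card_range q).symm
    _ ≤ _ := Finset.card_le_card hsub
    _ ≤ _ := Finset.card_image_le

lemma id_compl (p : Fin n) (q : ℕ) :
    (Finset.univ.filter fun a : Fin n => a ≤ p ∧ q ≤ (a : ℕ)).card +
      (Finset.univ.filter fun a : Fin n => a ≤ p ∧ (a : ℕ) < q).card = (p : ℕ) + 1 := by
  classical
  have hdisj : Disjoint (Finset.univ.filter fun a : Fin n => a ≤ p ∧ q ≤ (a : ℕ))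
      (Finset.univ.filter fun a : Fin n => a ≤ p ∧ (a : ℕ) < q) := by
    rw [Finset.disjoint_left]
    intro a ha hb
    simp only [Finset.mem_filter, Finset.mem_univ, true_and] at ha hb
    omega
  rw [← Finset.card_union_of_disjoint hdisj, ← card_Iic_filter p]
  congr 1
  ext a
  simp only [Finset.mem_union, Finset.mem_filter, Finset.mem_univ, true_and]
  constructor
  · rintro (⟨h1, -⟩ | ⟨h1, -⟩) <;> exact h1
  · intro h1
    by_cases h2 : q ≤ (a : ℕ)
    · exact Or.inl ⟨h1, h2⟩
    · exact Or.inr ⟨h1, by omega⟩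

/-- identity dominance -/
lemma id_dom (w : Equiv.Perm (Fin n)) (p : Fin n) (q : ℕ) :
    (Finset.univ.filter fun a : Fin n => a ≤ p ∧ q ≤ (a : ℕ)).card ≤ NB w p q := by
  classical
  have h1 := NB_compl w p q
  have h2 := id_compl p q
  have hwle := card_lt_le w p q
  by_cases hqp : q ≤ (p : ℕ) + 1
  · have := card_id_lt_ge p q hqp
    omega
  · have hsub : (Finset.univ.filter fun a : Fin n => a ≤ p ∧ (w a : ℕ) < q) ⊆
        Finset.univ.filter fun a : Fin n => a ≤ p ∧ (a : ℕ) < q := by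
      intro a ha
      simp only [Finset.mem_filter, Finset.mem_univ, true_and] at ha ⊢
      refine ⟨ha.1, ?_⟩
      have := Fin.le_def.mp ha.1
      omega
    have := Finset.card_le_card hsub
    omega

/-! ### Exchange arguments from lexicographic maximality -/

lemma lex_exchange (h : Fin n → Fin n) (w : Equiv.Perm (Fin n)) (hw : IsMaxFor h w)
    (b c : Fin n) (hbc : b < c) (hwbc : w b < w c) (hchb : w c ≤ h b) : False := by
  classical
  set w' := w * Equiv.swap b c with hw'def
  have hw'b : w' b = w c := by
    show w (Equiv.swap b c b) = w c; rw [Equiv.swap_apply_left]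
  have hw'c : w' c = w b := by
    show w (Equiv.swap b c c) = w b; rw [Equiv.swap_apply_right]
  have hw'o : ∀ a, a ≠ b → a ≠ c → w' a = w a := by
    intro a h1 h2
    show w (Equiv.swap b c a) = w a; rw [Equiv.swap_apply_of_ne_of_ne h1 h2]
  have hbdd : Bounded h w' := by
    intro a
    by_cases h1 : a = b
    · rw [h1, hw'b]; exact hchb
    · by_cases h2 : a = c
      · rw [h2, hw'c]; exact le_trans (le_of_lt hwbc) (hw.1 c)
      · rw [hw'o a h1 h2]; exact hw.1 a
  rcases hw.2 w' hbdd with heq | ⟨k, hk1, hk2⟩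
  · have : w' b = w b := by rw [heq]
    rw [hw'b] at this
    exact absurd this (ne_of_gt hwbc)
  · by_cases h1 : k = b
    · rw [h1, hw'b] at hk2; exact absurd hk2 (not_lt_of_gt hwbc)
    · by_cases h2 : k = c
      · have := hk1 b (h2 ▸ hbc)
        rw [hw'b] at this
        exact absurd this (ne_of_gt hwbc)
      · rw [hw'o k h1 h2] at hk2; exact absurd hk2 (lt_irrefl _)

lemma exists_big (h : Fin n → Fin n) (w : Equiv.Perm (Fin n)) (hw : IsMaxFor h w)
    (p : Fin n) : ∃ a, a ≤ p ∧ (h p : ℕ) ≤ (w a : ℕ) := by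
  by_contra hc
  push_neg at hc
  set c := w.symm (h p) with hcdef
  have hwc : w c = h p := Equiv.apply_symm_apply w (h p)
  have hpc : p < c := by
    by_contra hpc
    push_neg at hpc
    have := hc c hpc
    rw [hwc] at this
    exact absurd this (lt_irrefl _)
  refine lex_exchange h w hw p c hpc ?_ ?_
  · have h1 : (w p : ℕ) < (h p : ℕ) := hc p (le_refl p)
    rw [Fin.lt_def, hwc]
    exact h1
  · rw [hwc]



/-- if all small values `< q` sit in positions `≤ p` in the window
`i < q ≤ j ≤ h i`, `q ≤ p < j`, we contradict maximality -/
lemma b2core (h : Fin n → Fin n) (hh : IsHessenberg h) (w : Equiv.Perm (Fin n))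
    (hw : IsMaxFor h w) (i j p : Fin n) (q : ℕ) (hj : j ≤ h i)
    (hiq : (i:ℕ) < q) (hqj : q ≤ (j:ℕ)) (hpj : (p:ℕ) < (j:ℕ))
    (hall : ∀ v, v < q → ∃ a : Fin n, a ≤ p ∧ (w a:ℕ) = v) : False := by
  classical
  set B := Finset.univ.filter (fun a : Fin n => a ≤ p ∧ (w a:ℕ) < q) with hB
  have hBne : B.Nonempty := by
    obtain ⟨a, ha1, ha2⟩ := hall 0 (by omega)
    refine ⟨a, ?_⟩
    simp only [hB, Finset.mem_filter, Finset.mem_univ, true_and]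
    exact ⟨ha1, by omega⟩
  obtain ⟨b, hbmemB, hbmax⟩ : ∃ b ∈ B, ∀ a ∈ B, a ≤ b :=
    ⟨B.max' hBne, B.max'_mem hBne, fun a ha => B.le_max' a ha⟩
  have hbmem := hbmemB
  simp only [hB, Finset.mem_filter, Finset.mem_univ, true_and] at hbmem
  obtain ⟨hbp, hwb⟩ := hbmem
  have hbp' : (b:ℕ) ≤ (p:ℕ) := Fin.le_def.mp hbp
  -- card B ≥ q
  have hcardB : q ≤ B.card := by
    have hsub : Finset.range q ⊆ B.image (fun a => (w a : ℕ)) := by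
      intro v hv
      rw [Finset.mem_range] at hv
      obtain ⟨a, ha1, ha2⟩ := hall v hv
      refine Finset.mem_image.mpr ⟨a, ?_, ha2⟩
      simp only [hB, Finset.mem_filter, Finset.mem_univ, true_and]
      exact ⟨ha1, by omega⟩
    calc q = (Finset.range q).card := (Finset.card_range q).symm
      _ ≤ (B.image fun a => (w a:ℕ)).card := Finset.card_le_card hsub
      _ ≤ B.card := Finset.card_image_le
  -- positions in (b, p] all have value ≥ q
  have hG : (Finset.univ.filter fun a : Fin n => (b:ℕ) < (a:ℕ) ∧ (a:ℕ) ≤ (p:ℕ)) ⊆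
      Finset.univ.filter (fun a : Fin n => a ≤ p ∧ q ≤ (w a:ℕ)) := by
    intro a ha
    simp only [Finset.mem_filter, Finset.mem_univ, true_and] at ha ⊢
    refine ⟨Fin.le_def.mpr ha.2, ?_⟩
    by_contra hlt
    push_neg at hlt
    have hmem : a ∈ B := by
      simp only [hB, Finset.mem_filter, Finset.mem_univ, true_and]
      exact ⟨Fin.le_def.mpr ha.2, hlt⟩
    have := Fin.le_def.mp (hbmax a hmem)
    omega
  have hcard1 := Finset.card_le_card hG
  rw [card_Ioc_filter b p] at hcard1
  have hNBeq : (Finset.univ.filter (fun a : Fin n => a ≤ p ∧ q ≤ (w a:ℕ))).card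
      = NB w p q := rfl
  rw [hNBeq] at hcard1
  have hcompl := NB_compl w p q
  rw [← hB] at hcompl
  -- so b ≥ q - 1 ≥ i
  have hbge : (i:ℕ) ≤ (b:ℕ) := by omega
  -- find a small value after position p
  have hc : ∃ c : Fin n, (p:ℕ) < (c:ℕ) ∧ (w c:ℕ) ≤ (p:ℕ) + 1 := by
    by_contra hcc
    push_neg at hcc
    have hjn : (j:ℕ) < n := j.isLt
    have hsmall : ∀ v : ℕ, v < (p:ℕ)+2 → ∃ a : Fin n, a ≤ p ∧ (w a : ℕ) = v := by
      intro v hv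
      have hvn : v < n := by omega
      set a := w.symm ⟨v, hvn⟩ with hadef
      have hwa : w a = ⟨v, hvn⟩ := Equiv.apply_symm_apply w _
      refine ⟨a, ?_, by rw [hwa]⟩
      by_contra hap
      have hap' : (p:ℕ) < (a:ℕ) := by
        rw [Fin.le_def] at hap; omega
      have := hcc a hap'
      rw [hwa] at this
      simp only at this
      omega
    have hsub2 : Finset.range ((p:ℕ)+2) ⊆
        (Finset.univ.filter fun a : Fin n => a ≤ p).image (fun a => (w a:ℕ)) := by
      intro v hv
      rw [Finset.mem_range] at hv
      obtain ⟨a, ha1, ha2⟩ := hsmall v hv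
      refine Finset.mem_image.mpr ⟨a, ?_, ha2⟩
      simp only [Finset.mem_filter, Finset.mem_univ, true_and]
      exact ha1
    have : (p:ℕ) + 2 ≤ (p:ℕ) + 1 := by
      calc (p:ℕ) + 2 = (Finset.range ((p:ℕ)+2)).card := (Finset.card_range _).symm
        _ ≤ ((Finset.univ.filter fun a : Fin n => a ≤ p).image fun a => (w a:ℕ)).card :=
            Finset.card_le_card hsub2
        _ ≤ (Finset.univ.filter fun a : Fin n => a ≤ p).card := Finset.card_image_le
        _ = (p:ℕ) + 1 := card_Iic_filter p
    omega
  obtain ⟨c, hpc, hwcp⟩ := hc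
  have hwcq : q ≤ (w c:ℕ) := by
    by_contra hlt
    push_neg at hlt
    obtain ⟨a, ha1, ha2⟩ := hall ((w c:ℕ)) hlt
    have hac : a = c := w.injective (Fin.val_injective ha2)
    rw [hac] at ha1
    have := Fin.le_def.mp ha1
    omega
  refine lex_exchange h w hw b c (Fin.lt_def.mpr (by omega)) (Fin.lt_def.mpr (by omega)) ?_
  -- w c ≤ h b
  have h1 : (h i : ℕ) ≤ (h b : ℕ) := Fin.le_def.mp (hh.2 (Fin.le_def.mpr hbge))
  have h2 : (j:ℕ) ≤ (h i:ℕ) := Fin.le_def.mp hj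
  exact Fin.le_def.mpr (by omega)

/-! ### Dominance of the transposition -/

lemma swap_dom (h : Fin n → Fin n) (hh : IsHessenberg h) (w : Equiv.Perm (Fin n))
    (hw : IsMaxFor h w) (i j : Fin n) (hij : i < j) (hj : j ≤ h i) :
    Dom w (Equiv.swap i j) := by
  classical
  intro p q
  have hti : Equiv.swap i j i = j := Equiv.swap_apply_left i j
  have hto : ∀ a : Fin n, a ≠ i → a ≠ j → Equiv.swap i j a = a := fun a h1 h2 =>
    Equiv.swap_apply_of_ne_of_ne h1 h2
  have hijv : (i:ℕ) < (j:ℕ) := Fin.lt_def.mp hij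
  by_cases hpi : p < i
  · have heq : NB (Equiv.swap i j) p q =
        (Finset.univ.filter fun a : Fin n => a ≤ p ∧ q ≤ (a : ℕ)).card := by
      unfold NB
      congr 1
      apply Finset.filter_congr
      intro a _
      constructor
      · rintro ⟨h1, h2⟩
        refine ⟨h1, ?_⟩
        rwa [hto a (ne_of_lt (lt_of_le_of_lt h1 hpi))
          (ne_of_lt (lt_of_le_of_lt h1 (lt_trans hpi hij)))] at h2
      · rintro ⟨h1, h2⟩
        refine ⟨h1, ?_⟩
        rwa [hto a (ne_of_lt (lt_of_le_of_lt h1 hpi))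
          (ne_of_lt (lt_of_le_of_lt h1 (lt_trans hpi hij)))]
    rw [heq]
    exact id_dom w p q
  by_cases hpj : j ≤ p
  · have h1 : Equiv.swap i j = 1 * Equiv.swap i j := (one_mul _).symm
    rw [h1, NB_mul_swap_le 1 i j p (le_trans (le_of_lt hij) hpj) hpj]
    have heq : NB (1 : Equiv.Perm (Fin n)) p q =
        (Finset.univ.filter fun a : Fin n => a ≤ p ∧ q ≤ (a : ℕ)).card := rfl
    rw [heq]
    exact id_dom w p q
  have hip : i ≤ p := not_lt.mp hpi
  have hpj' : p < j := not_le.mp hpj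
  have hipv : (i:ℕ) ≤ (p:ℕ) := Fin.le_def.mp hip
  have hpjv : (p:ℕ) < (j:ℕ) := Fin.lt_def.mp hpj'
  have hne_j : ∀ a : Fin n, a ≤ p → a ≠ j := fun a ha => ne_of_lt (lt_of_le_of_lt ha hpj')
  by_cases hq1 : q ≤ (i:ℕ)
  · have heq : NB (Equiv.swap i j) p q =
        (Finset.univ.filter fun a : Fin n => a ≤ p ∧ q ≤ (a : ℕ)).card := by
      unfold NB
      congr 1
      apply Finset.filter_congr
      intro a _
      constructor
      · rintro ⟨h1, h2⟩
        refine ⟨h1, ?_⟩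
        by_cases hai : a = i
        · rw [hai]; exact hq1
        · rwa [hto a hai (hne_j a h1)] at h2
      · rintro ⟨h1, h2⟩
        refine ⟨h1, ?_⟩
        by_cases hai : a = i
        · rw [hai, hti]; omega
        · rwa [hto a hai (hne_j a h1)]
    rw [heq]
    exact id_dom w p q
  push_neg at hq1
  by_cases hq2 : (j:ℕ) < q
  · have heq : NB (Equiv.swap i j) p q = 0 := by
      unfold NB
      rw [Finset.card_eq_zero]
      rw [Finset.filter_eq_empty_iff]
      intro a _
      rintro ⟨h1, h2⟩
      by_cases hai : a = i
      · rw [hai, hti] at h2; omega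
      · rw [hto a hai (hne_j a h1)] at h2
        have := Fin.le_def.mp h1
        omega
    rw [heq]
    exact Nat.zero_le _
  push_neg at hq2
  -- i < q ≤ j
  have hins : (Finset.univ.filter fun a : Fin n => a ≤ p ∧ q ≤ ((Equiv.swap i j) a : ℕ)) =
      insert i (Finset.univ.filter fun a : Fin n => a ≤ p ∧ q ≤ (a : ℕ)) := by
    ext a
    simp only [Finset.mem_filter, Finset.mem_univ, true_and, Finset.mem_insert]
    constructor
    · rintro ⟨h1, h2⟩
      by_cases hai : a = i
      · exact Or.inl hai
      · rw [hto a hai (hne_j a h1)] at h2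
        exact Or.inr ⟨h1, h2⟩
    · rintro (rfl | ⟨h1, h2⟩)
      · refine ⟨hip, ?_⟩
        rw [hti]
        omega
      · refine ⟨h1, ?_⟩
        by_cases hai : a = i
        · exfalso; rw [hai] at h2; omega
        · rwa [hto a hai (hne_j a h1)]
  have hnm : i ∉ (Finset.univ.filter fun a : Fin n => a ≤ p ∧ q ≤ (i : ℕ)) := by
    simp only [Finset.mem_filter, Finset.mem_univ, true_and]
    rintro ⟨-, h2⟩; omega
  have hnm' : i ∉ (Finset.univ.filter fun a : Fin n => a ≤ p ∧ q ≤ (a : ℕ)) := by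
    simp only [Finset.mem_filter, Finset.mem_univ, true_and]
    rintro ⟨-, h2⟩; omega
  have hcard : NB (Equiv.swap i j) p q =
      (Finset.univ.filter fun a : Fin n => a ≤ p ∧ q ≤ (a : ℕ)).card + 1 := by
    unfold NB
    rw [hins, Finset.card_insert_of_notMem hnm']
  rw [hcard]
  by_cases hqp : (p:ℕ) < q
  · -- identity part empty; need 1 ≤ NB w p q
    have hempty : (Finset.univ.filter fun a : Fin n => a ≤ p ∧ q ≤ (a : ℕ)) = ∅ := by
      rw [Finset.filter_eq_empty_iff]
      intro a _
      rintro ⟨h1, h2⟩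
      have := Fin.le_def.mp h1
      omega
    rw [hempty, Finset.card_empty]
    obtain ⟨a, hap, hwa⟩ := exists_big h w hw p
    have hhm : (h i : ℕ) ≤ (h p : ℕ) := Fin.le_def.mp (hh.2 hip)
    have hjhi : (j:ℕ) ≤ (h i:ℕ) := Fin.le_def.mp hj
    have hmem : a ∈ Finset.univ.filter fun a : Fin n => a ≤ p ∧ q ≤ (w a : ℕ) := by
      simp only [Finset.mem_filter, Finset.mem_univ, true_and]
      exact ⟨hap, by omega⟩
    have : 0 < NB w p q := Finset.card_pos.mpr ⟨a, hmem⟩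
    omega
  push_neg at hqp
  -- q ≤ p : need the strict counting bound
  have hlt : (Finset.univ.filter fun a : Fin n => a ≤ p ∧ (w a : ℕ) < q).card < q := by
    by_contra hge
    push_neg at hge
    -- all values < q appear at positions ≤ p
    have hallv : ∀ v, v < q → ∃ a : Fin n, a ≤ p ∧ (w a:ℕ) = v := by
      have hinj : Set.InjOn (fun a => (w a : ℕ))
          ↑(Finset.univ.filter fun a : Fin n => a ≤ p ∧ (w a : ℕ) < q) := by
        intro a _ b _ hab
        exact w.injective (Fin.val_injective hab)
      have h1 : ((Finset.univ.filter fun a : Fin n => a ≤ p ∧ (w a : ℕ) < q).image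
          fun a => (w a : ℕ)) ⊆ Finset.range q := by
        intro v hv
        simp only [Finset.mem_image, Finset.mem_filter, Finset.mem_univ, true_and] at hv
        obtain ⟨a, ⟨-, ha⟩, rfl⟩ := hv
        exact Finset.mem_range.mpr ha
      have h2 : (Finset.range q).card ≤ ((Finset.univ.filter
          fun a : Fin n => a ≤ p ∧ (w a : ℕ) < q).image fun a => (w a : ℕ)).card := by
        rw [Finset.card_range, Finset.card_image_of_injOn hinj]
        exact hge
      have heqset := Finset.eq_of_subset_of_card_le h1 h2
      intro v hv
      have : v ∈ Finset.range q := Finset.mem_range.mpr hv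
      rw [← heqset] at this
      simp only [Finset.mem_image, Finset.mem_filter, Finset.mem_univ, true_and] at this
      obtain ⟨a, ⟨ha1, -⟩, ha3⟩ := this
      exact ⟨a, ha1, ha3⟩
    exact b2core h hh w hw i j p q hj hq1 hq2 hpjv hallv
  have hcompl := NB_compl w p q
  have hidc := id_compl p q
  have hidge := card_id_lt_ge p q (by omega)
  omega

/-! ### From dominance to Bruhat order -/

lemma step_exists (w x : Equiv.Perm (Fin n)) (hd : Dom w x) (hne : x ≠ w) :
    ∃ x' : Equiv.Perm (Fin n),
      ((∃ t : Equiv.Perm (Fin n), t.IsSwap ∧ x' = x * t) ∧ lengthPerm x < lengthPerm x') ∧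
        Dom w x' := by
  classical
  set D := Finset.univ.filter (fun a : Fin n => x a ≠ w a) with hD
  have hDne : D.Nonempty := by
    by_contra hc
    rw [Finset.not_nonempty_iff_eq_empty] at hc
    apply hne
    apply Equiv.ext
    intro a
    by_contra hxa
    have : a ∈ D := by
      simp only [hD, Finset.mem_filter, Finset.mem_univ, true_and]
      exact hxa
    rw [hc] at this
    exact absurd this (Finset.notMem_empty a)
  set i := D.min' hDne with hidef
  have himem := D.min'_mem hDne
  simp only [hD, Finset.mem_filter, Finset.mem_univ, true_and] at himem
  have hagree : ∀ a, a < i → x a = w a := by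
    intro a ha
    by_contra hc
    have hmem : a ∈ D := by
      simp only [hD, Finset.mem_filter, Finset.mem_univ, true_and]
      exact hc
    have := D.min'_le a hmem
    rw [← hidef] at this
    exact absurd ha (not_lt.mpr this)
  have hxiwi : (x i:ℕ) < (w i:ℕ) := by
    rcases lt_trichotomy ((x i:ℕ)) ((w i:ℕ)) with hlt | heq | hgt
    · exact hlt
    · exact absurd (Fin.val_injective heq) himem
    · exfalso
      have hsub : insert i (Finset.univ.filter
            fun a : Fin n => a ≤ i ∧ (w i:ℕ)+1 ≤ (w a:ℕ)) ⊆
          Finset.univ.filter fun a : Fin n => a ≤ i ∧ (w i:ℕ)+1 ≤ (x a:ℕ) := by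
        intro a ha
        rcases Finset.mem_insert.mp ha with rfl | hmem
        · simp only [Finset.mem_filter, Finset.mem_univ, true_and]
          exact ⟨le_refl _, by omega⟩
        · simp only [Finset.mem_filter, Finset.mem_univ, true_and] at hmem ⊢
          obtain ⟨h1, h2⟩ := hmem
          have hai : a < i := lt_of_le_of_ne h1 (by rintro rfl; omega)
          exact ⟨h1, by rw [hagree a hai]; exact h2⟩
      have hnm : i ∉ Finset.univ.filter
          fun a : Fin n => a ≤ i ∧ (w i:ℕ)+1 ≤ (w a:ℕ) := by
        simp only [Finset.mem_filter, Finset.mem_univ, true_and]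
        rintro ⟨-, h2⟩
        omega
      have hcards := Finset.card_le_card hsub
      rw [Finset.card_insert_of_notMem hnm] at hcards
      have hdi := hd i ((w i:ℕ)+1)
      unfold NB at hdi
      omega
  set p0 := x.symm (w i) with hp0
  have hxp0 : x p0 = w i := Equiv.apply_symm_apply x (w i)
  have hip0 : i < p0 := by
    rcases lt_trichotomy i p0 with hlt | heq | hgt
    · exact hlt
    · exfalso
      rw [← heq] at hxp0
      exact himem hxp0
    · exfalso
      have h1 := hagree p0 hgt
      rw [hxp0] at h1
      have h2 : p0 = i := w.injective h1.symm
      rw [h2] at hgt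
      exact lt_irrefl i hgt
  set J := Finset.univ.filter
    (fun a : Fin n => i < a ∧ (x i:ℕ) < (x a:ℕ) ∧ (x a:ℕ) ≤ (w i:ℕ)) with hJ
  have hJne : J.Nonempty := by
    refine ⟨p0, ?_⟩
    simp only [hJ, Finset.mem_filter, Finset.mem_univ, true_and]
    exact ⟨hip0, by rw [hxp0]; exact ⟨hxiwi, le_refl _⟩⟩
  set j := J.min' hJne with hjdef
  have hjmem := J.min'_mem hJne
  simp only [hJ, Finset.mem_filter, Finset.mem_univ, true_and] at hjmem
  obtain ⟨hij, hxij, hjw⟩ := hjmem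
  have hmin : ∀ a, i < a → a < j → (x i:ℕ) < (x a:ℕ) → (w i:ℕ) < (x a:ℕ) := by
    intro a h1 h2 h3
    by_contra hc
    push_neg at hc
    have hmem : a ∈ J := by
      simp only [hJ, Finset.mem_filter, Finset.mem_univ, true_and]
      exact ⟨h1, h3, hc⟩
    have := J.min'_le a hmem
    rw [← hjdef] at this
    exact absurd h2 (not_lt.mpr this)
  refine ⟨x * Equiv.swap i j, ⟨⟨Equiv.swap i j, ⟨i, j, ne_of_lt hij, rfl⟩, rfl⟩, ?_⟩, ?_⟩
  · exact length_mul_swap_lt x i j hij (Fin.lt_def.mpr hxij)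
  · exact dom_step w x i j hd hagree hij hxij hjw hmin


lemma length_le_sq (x : Equiv.Perm (Fin n)) : lengthPerm x ≤ n * n := by
  unfold lengthPerm
  calc _ ≤ (Finset.univ : Finset (Fin n × Fin n)).card := Finset.card_filter_le _ _
    _ = n * n := by rw [Finset.card_univ]; simp

lemma dom_to_bruhat (w : Equiv.Perm (Fin n)) (k : ℕ) :
    ∀ x, n * n ≤ lengthPerm x + k → Dom w x → BruhatLE x w := by
  induction k with
  | zero =>
    intro x hk hd
    by_cases hne : x = w
    · rw [hne]; exact Relation.ReflTransGen.refl
    · exfalso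
      obtain ⟨x', ⟨-, hlen⟩, -⟩ := step_exists w x hd hne
      have := length_le_sq x'
      omega
  | succ k ih =>
    intro x hk hd
    by_cases hne : x = w
    · rw [hne]; exact Relation.ReflTransGen.refl
    · obtain ⟨x', hstep, hd'⟩ := step_exists w x hd hne
      exact Relation.ReflTransGen.head hstep (ih x' (by have := hstep.2; omega) hd')

end S7

/-- if `h` is a Hessenberg function with codominant permutation `w_h`,
then for all `i < j` with `j ≤ h i`, the transposition `(i, j)` is `≤ w_h` in
Bruhat order. -/
theorem stmt7 (n : ℕ) (h : Fin n → Fin n) (hh : IsHessenberg h)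
    (w : Equiv.Perm (Fin n)) (hw : IsMaxFor h w)
    (i j : Fin n) (hij : i < j) (hj : j ≤ h i) :
    BruhatLE (Equiv.swap i j) w := by
  have hd : S7.Dom w (Equiv.swap i j) := S7.swap_dom h hh w hw i j hij hj
  exact S7.dom_to_bruhat w (n * n) (Equiv.swap i j) (Nat.le_add_left _ _) hd
end

section
/- Let h : [n] → [n] be a Hessenberg function and w_h the corresponding codominant permutation. Then a transposition (i, j) with i < j satisfies (i, j) ≤ w_h in Bruhat order if and only if j ≤ h(i). In particular, |{(i,j) : i < j, (i,j) ≤ w_h}| = ℓ(w_h). -/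
namespace Stmt8Aux
open Finset Equiv

variable {n : ℕ}

def InvP (x : Equiv.Perm (Fin n)) : Finset (Fin n × Fin n) :=
  Finset.univ.filter fun p : Fin n × Fin n => p.1 < p.2 ∧ x p.2 < x p.1

lemma lengthPerm_eq (x : Equiv.Perm (Fin n)) : lengthPerm x = (InvP x).card := rfl

lemma mem_Inv {x : Equiv.Perm (Fin n)} {p : Fin n × Fin n} :
    p ∈ InvP x ↔ p.1 < p.2 ∧ x p.2 < x p.1 := by simp [InvP]

def Spec (a b : Fin n) (p : Fin n × Fin n) : Prop :=
  (p.1 = a ∧ a < p.2 ∧ p.2 < b) ∨ (p.2 = b ∧ a < p.1 ∧ p.1 < b)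

instance (a b : Fin n) (p : Fin n × Fin n) : Decidable (Spec a b p) := by
  unfold Spec; infer_instance

def Fmap (a b : Fin n) (p : Fin n × Fin n) : Fin n × Fin n :=
  if Spec a b p then p else (Equiv.swap a b p.1, Equiv.swap a b p.2)

lemma key_lt {a b : Fin n} (hab : a < b) {x : Equiv.Perm (Fin n)} (hx : x a < x b)
    {p : Fin n × Fin n} (hpq : p.1 < p.2) (hinv : x p.2 < x p.1)
    (hns : ¬ Spec a b p) : Equiv.swap a b p.1 < Equiv.swap a b p.2 := by
  unfold Spec at hns
  push_neg at hns
  obtain ⟨hns1, hns2⟩ := hns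
  by_cases hpa : p.1 = a
  · have hqb : p.2 ≠ b := by
      intro hqb
      rw [hpa, hqb] at hinv
      exact absurd hx (not_lt.2 hinv.le)
    have hqa : p.2 ≠ a := by rw [← hpa]; exact hpq.ne'
    rw [hpa, Equiv.swap_apply_left, Equiv.swap_apply_of_ne_of_ne hqa hqb]
    have h1 : a < p.2 := hpa ▸ hpq
    exact lt_of_le_of_ne (hns1 hpa h1) (Ne.symm hqb)
  · by_cases hpb : p.1 = b
    · have hqa : p.2 ≠ a := fun hq => absurd (hq ▸ (hpb ▸ hpq)) (not_lt.2 hab.le)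
      have hqb : p.2 ≠ b := by rw [← hpb]; exact hpq.ne'
      rw [hpb, Equiv.swap_apply_right, Equiv.swap_apply_of_ne_of_ne hqa hqb]
      exact hab.trans (hpb ▸ hpq)
    · rw [Equiv.swap_apply_of_ne_of_ne hpa hpb]
      by_cases hqa : p.2 = a
      · rw [hqa, Equiv.swap_apply_left]
        exact (hqa ▸ hpq).trans hab
      · by_cases hqb : p.2 = b
        · rw [hqb, Equiv.swap_apply_right]
          have h1 : ¬ a < p.1 := fun h => (hns2 hqb h).not_gt (hqb ▸ hpq)
          exact lt_of_le_of_ne (not_lt.1 h1) hpa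
        · rw [Equiv.swap_apply_of_ne_of_ne hqa hqb]
          exact hpq

lemma length_lt_swap {a b : Fin n} (hab : a < b) {x : Equiv.Perm (Fin n)}
    (hx : x a < x b) : lengthPerm x < lengthPerm (x * Equiv.swap a b) := by
  classical
  have hyapp : ∀ c, (x * Equiv.swap a b) c = x (Equiv.swap a b c) := fun c => rfl
  have htt : ∀ c, Equiv.swap a b (Equiv.swap a b c) = c :=
    fun c => Equiv.swap_apply_self a b c
  have hmaps : ∀ p ∈ InvP x, Fmap a b p ∈ InvP (x * Equiv.swap a b) := by
    intro p hp
    rw [mem_Inv] at hp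
    obtain ⟨hpq, hinv⟩ := hp
    unfold Fmap
    split_ifs with hs
    · rw [mem_Inv]
      refine ⟨hpq, ?_⟩
      rw [hyapp, hyapp]
      rcases hs with ⟨e, haq, hqb⟩ | ⟨e, hap, hpb⟩
      · rw [e, Equiv.swap_apply_left, Equiv.swap_apply_of_ne_of_ne haq.ne' hqb.ne]
        exact (e ▸ hinv).trans hx
      · rw [e, Equiv.swap_apply_right, Equiv.swap_apply_of_ne_of_ne hap.ne' hpb.ne]
        exact hx.trans (e ▸ hinv)
    · rw [mem_Inv]
      refine ⟨key_lt hab hx hpq hinv hs, ?_⟩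
      simp only [hyapp, htt]
      exact hinv
  have hinj : Set.InjOn (Fmap a b) (InvP x) := by
    intro p1 h1 p2 h2 heq
    rw [Finset.mem_coe, mem_Inv] at h1 h2
    unfold Fmap at heq
    split_ifs at heq with hs1 hs2 hs2
    · exact heq
    · exfalso
      have e1 : p1.1 = Equiv.swap a b p2.1 := congrArg Prod.fst heq
      have e2 : p1.2 = Equiv.swap a b p2.2 := congrArg Prod.snd heq
      have hp2 : p2.1 = Equiv.swap a b p1.1 := by rw [e1, htt]
      have hq2 : p2.2 = Equiv.swap a b p1.2 := by rw [e2, htt]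
      rcases hs1 with ⟨e, haq, hqb⟩ | ⟨e, hap, hpb⟩
      · rw [e, Equiv.swap_apply_left] at hp2
        rw [Equiv.swap_apply_of_ne_of_ne haq.ne' hqb.ne] at hq2
        have := h2.1
        rw [hp2, hq2] at this
        exact lt_irrefl _ (hqb.trans this)
      · rw [e, Equiv.swap_apply_right] at hq2
        rw [Equiv.swap_apply_of_ne_of_ne hap.ne' hpb.ne] at hp2
        have := h2.1
        rw [hp2, hq2] at this
        exact lt_irrefl _ (hap.trans this)
    · exfalso
      have e1 : Equiv.swap a b p1.1 = p2.1 := congrArg Prod.fst heq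
      have e2 : Equiv.swap a b p1.2 = p2.2 := congrArg Prod.snd heq
      have hp1 : p1.1 = Equiv.swap a b p2.1 := by rw [← e1, htt]
      have hq1 : p1.2 = Equiv.swap a b p2.2 := by rw [← e2, htt]
      rcases hs2 with ⟨e, haq, hqb⟩ | ⟨e, hap, hpb⟩
      · rw [e, Equiv.swap_apply_left] at hp1
        rw [Equiv.swap_apply_of_ne_of_ne haq.ne' hqb.ne] at hq1
        have := h1.1
        rw [hp1, hq1] at this
        exact lt_irrefl _ (hqb.trans this)
      · rw [e, Equiv.swap_apply_right] at hq1
        rw [Equiv.swap_apply_of_ne_of_ne hap.ne' hpb.ne] at hp1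
        have := h1.1
        rw [hp1, hq1] at this
        exact lt_irrefl _ (hap.trans this)
    · have e1 : Equiv.swap a b p1.1 = Equiv.swap a b p2.1 := congrArg Prod.fst heq
      have e2 : Equiv.swap a b p1.2 = Equiv.swap a b p2.2 := congrArg Prod.snd heq
      have f1 : p1.1 = p2.1 := (Equiv.swap a b).injective e1
      have f2 : p1.2 = p2.2 := (Equiv.swap a b).injective e2
      exact Prod.ext f1 f2
  have hab_mem : (a, b) ∈ InvP (x * Equiv.swap a b) := by
    rw [mem_Inv]
    refine ⟨hab, ?_⟩
    show (x * Equiv.swap a b) b < (x * Equiv.swap a b) a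
    rw [hyapp, hyapp, Equiv.swap_apply_left, Equiv.swap_apply_right]
    exact hx
  have hab_not : (a, b) ∉ (InvP x).image (Fmap a b) := by
    rw [Finset.mem_image]
    rintro ⟨p, hp, heq⟩
    rw [mem_Inv] at hp
    unfold Fmap at heq
    split_ifs at heq with hs
    · rcases hs with ⟨_, _, hqb⟩ | ⟨_, hap, _⟩
      · exact absurd (congrArg Prod.snd heq) hqb.ne
      · exact absurd (congrArg Prod.fst heq).symm hap.ne
    · have e1 : Equiv.swap a b p.1 = a := congrArg Prod.fst heq
      have e2 : Equiv.swap a b p.2 = b := congrArg Prod.snd heq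
      have hp1 : p.1 = b := by rw [← htt p.1, e1, Equiv.swap_apply_left]
      have hq1 : p.2 = a := by rw [← htt p.2, e2, Equiv.swap_apply_right]
      have := hp.1
      rw [hp1, hq1] at this
      exact absurd (hab.trans this) (lt_irrefl a)
  have hsub : (InvP x).image (Fmap a b) ⊆ InvP (x * Equiv.swap a b) := by
    intro p hp
    rw [Finset.mem_image] at hp
    obtain ⟨q, hq, rfl⟩ := hp
    exact hmaps q hq
  have hcard : ((InvP x).image (Fmap a b)).card = (InvP x).card :=
    Finset.card_image_of_injOn hinj
  rw [lengthPerm_eq, lengthPerm_eq, ← hcard]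
  exact Finset.card_lt_card ⟨hsub, fun hsup => hab_not (hsup hab_mem)⟩

lemma length_le (x : Equiv.Perm (Fin n)) : lengthPerm x ≤ n * n := by
  unfold lengthPerm
  calc _ ≤ (Finset.univ : Finset (Fin n × Fin n)).card := Finset.card_filter_le _ _
  _ = n * n := by simp [Finset.card_univ]

lemma step_dir {x : Equiv.Perm (Fin n)} {a b : Fin n} (hab : a < b)
    (h2 : lengthPerm x < lengthPerm (x * Equiv.swap a b)) : x a < x b := by
  rcases lt_trichotomy (x a) (x b) with hc | hc | hc
  · exact hc
  · exact absurd (x.injective hc) hab.ne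
  · exfalso
    have h3 : (x * Equiv.swap a b) a < (x * Equiv.swap a b) b := by
      show x (Equiv.swap a b a) < x (Equiv.swap a b b)
      rw [Equiv.swap_apply_left, Equiv.swap_apply_right]
      exact hc
    have h4 := length_lt_swap hab h3
    rw [mul_assoc, Equiv.swap_mul_self, mul_one] at h4
    omega

lemma step_shape {x y : Equiv.Perm (Fin n)}
    (h1 : ∃ t : Equiv.Perm (Fin n), t.IsSwap ∧ y = x * t)
    (h2 : lengthPerm x < lengthPerm y) :
    ∃ a b : Fin n, a < b ∧ x a < x b ∧ y = x * Equiv.swap a b := by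
  obtain ⟨t, ⟨a, b, hne, rfl⟩, rfl⟩ := h1
  rcases hne.lt_or_gt with hab | hab
  · exact ⟨a, b, hab, step_dir hab h2, rfl⟩
  · refine ⟨b, a, hab, ?_, by rw [Equiv.swap_comm]⟩
    apply step_dir hab
    rwa [Equiv.swap_comm b a]

def rnk (x : Equiv.Perm (Fin n)) (p q : Fin n) : ℕ :=
  (Finset.univ.filter fun c => c ≤ p ∧ q ≤ x c).card

lemma rnk_le_step {a b : Fin n} (hab : a < b) {x : Equiv.Perm (Fin n)}
    (hx : x a < x b) (p q : Fin n) : rnk x p q ≤ rnk (x * Equiv.swap a b) p q := by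
  classical
  have happ : ∀ c, (x * Equiv.swap a b) c = x (Equiv.swap a b c) := fun c => rfl
  set S : Finset (Fin n) := Finset.univ.filter fun c => c ≤ p ∧ q ≤ x c with hS
  set T : Finset (Fin n) := Finset.univ.filter
    fun c => c ≤ p ∧ q ≤ (x * Equiv.swap a b) c with hT
  have hsub : S \ T ⊆ {b} := by
    intro c hc
    rw [Finset.mem_sdiff] at hc
    obtain ⟨hcS, hcT⟩ := hc
    rw [hS, Finset.mem_filter] at hcS
    obtain ⟨-, hcp, hqc⟩ := hcS
    by_cases hca : c = a
    · exfalso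
      apply hcT
      rw [hT, Finset.mem_filter]
      refine ⟨Finset.mem_univ _, hcp, ?_⟩
      rw [happ, hca, Equiv.swap_apply_left]
      exact (hca ▸ hqc).trans hx.le
    · by_cases hcb : c = b
      · simp [hcb]
      · exfalso
        apply hcT
        rw [hT, Finset.mem_filter]
        refine ⟨Finset.mem_univ _, hcp, ?_⟩
        rw [happ, Equiv.swap_apply_of_ne_of_ne hca hcb]
        exact hqc
  have hkey : (S \ T).card ≤ (T \ S).card := by
    rcases Finset.eq_empty_or_nonempty (S \ T) with he | hne
    · simp [he]
    · have hbmem : b ∈ S \ T := by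
        obtain ⟨c, hc⟩ := hne
        have := hsub hc
        rw [Finset.mem_singleton] at this
        rwa [this] at hc
      rw [Finset.mem_sdiff] at hbmem
      obtain ⟨hbS, hbT⟩ := hbmem
      rw [hS, Finset.mem_filter] at hbS
      obtain ⟨-, hbp, hqb⟩ := hbS
      have hqa : ¬ q ≤ x a := by
        intro hqa
        apply hbT
        rw [hT, Finset.mem_filter]
        refine ⟨Finset.mem_univ _, hbp, ?_⟩
        rw [happ, Equiv.swap_apply_right]
        exact hqa
      have haTS : a ∈ T \ S := by
        rw [Finset.mem_sdiff, hT, hS, Finset.mem_filter, Finset.mem_filter]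
        refine ⟨⟨Finset.mem_univ _, hab.le.trans hbp, ?_⟩, ?_⟩
        · rw [happ, Equiv.swap_apply_left]; exact hqb
        · rintro ⟨-, -, hc⟩; exact hqa hc
      calc (S \ T).card ≤ ({b} : Finset (Fin n)).card := Finset.card_le_card hsub
      _ = 1 := Finset.card_singleton b
      _ ≤ (T \ S).card := Finset.card_pos.2 ⟨a, haTS⟩
  have e1 : (S \ T).card + (S ∩ T).card = S.card := Finset.card_sdiff_add_card_inter S T
  have e2 : (T \ S).card + (T ∩ S).card = T.card := Finset.card_sdiff_add_card_inter T S
  have e3 : (S ∩ T).card = (T ∩ S).card := by rw [Finset.inter_comm]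
  show S.card ≤ T.card
  omega

lemma rnk_mono {u w : Equiv.Perm (Fin n)} (hbr : BruhatLE u w) (p q : Fin n) :
    rnk u p q ≤ rnk w p q := by
  unfold BruhatLE at hbr
  induction hbr with
  | refl => exact le_refl _
  | tail _ hstep ih =>
    obtain ⟨a, b, hab, hxab, rfl⟩ := step_shape hstep.1 hstep.2
    exact ih.trans (rnk_le_step hab hxab p q)

lemma bruhat_imp {h : Fin n → Fin n} (hh : IsHessenberg h) {w : Equiv.Perm (Fin n)}
    (hb : Bounded h w) {i j : Fin n} (hij : i < j)
    (hbr : BruhatLE (Equiv.swap i j) w) : j ≤ h i := by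
  have h1 : 0 < rnk (Equiv.swap i j) i j := by
    rw [rnk, Finset.card_pos]
    exact ⟨i, Finset.mem_filter.2 ⟨Finset.mem_univ _, le_refl _,
      by rw [Equiv.swap_apply_left]⟩⟩
  have h2 := (rnk_mono hbr i j).trans_lt' h1
  rw [rnk, Finset.card_pos] at h2
  obtain ⟨a, ha⟩ := h2
  rw [Finset.mem_filter] at ha
  obtain ⟨-, hai, hja⟩ := ha
  exact hja.trans ((hb a).trans (hh.2 hai))

lemma lexle_antisymm {u v : Equiv.Perm (Fin n)} (h1 : LexLE u v) (h2 : LexLE v u) :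
    u = v := by
  rcases h1 with rfl | ⟨i, hpre, hlt⟩
  · rfl
  rcases h2 with rfl | ⟨i', hpre', hlt'⟩
  · rfl
  exfalso
  rcases lt_trichotomy i i' with hc | hc | hc
  · have := hpre' i hc
    rw [this] at hlt
    exact lt_irrefl _ hlt
  · subst hc
    exact lt_irrefl _ (hlt.trans hlt')
  · have := hpre i' hc
    rw [this] at hlt'
    exact lt_irrefl _ hlt'

lemma lex_max_of_noswap {h : Fin n → Fin n} {u : Equiv.Perm (Fin n)}
    (hP : ∀ i j : Fin n, i < j → u j ≤ h i → u j < u i)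
    {v : Equiv.Perm (Fin n)} (hv : Bounded h v) : LexLE v u := by
  classical
  by_cases hvu : v = u
  · exact Or.inl hvu
  right
  set s : Finset (Fin n) := Finset.univ.filter fun i => v i ≠ u i with hs
  have hsne : s.Nonempty := by
    by_contra hempty
    rw [Finset.not_nonempty_iff_eq_empty] at hempty
    apply hvu
    refine Equiv.ext fun c => ?_
    by_contra hc
    have : c ∈ s := Finset.mem_filter.2 ⟨Finset.mem_univ _, hc⟩
    rw [hempty] at this
    exact absurd this (Finset.notMem_empty c)
  set i := s.min' hsne with hi
  have hmem : v i ≠ u i := (Finset.mem_filter.1 (s.min'_mem hsne)).2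
  have hpre : ∀ j, j < i → v j = u j := by
    intro j hj
    by_contra hne
    exact absurd (s.min'_le j (Finset.mem_filter.2 ⟨Finset.mem_univ _, hne⟩))
      (not_le.2 hj)
  refine ⟨i, hpre, ?_⟩
  rcases lt_trichotomy (v i) (u i) with hc | hc | hc
  · exact hc
  · exact absurd hc hmem
  exfalso
  set jj := u.symm (v i) with hjj
  have hji : u jj = v i := u.apply_symm_apply _
  have hne : jj ≠ i := by
    intro e
    rw [e] at hji
    exact hmem hji.symm
  have hgt : i < jj := by
    rcases hne.lt_or_gt with hlt | hlt
    · exfalso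
      have := hpre jj hlt
      rw [hji] at this
      exact hne (v.injective this)
    · exact hlt
  have hb : u jj ≤ h i := hji ▸ hv i
  have := hP i jj hgt hb
  rw [hji] at this
  exact absurd this (not_lt.2 hc.le)

lemma eq_of_nostep {h : Fin n → Fin n} {w : Equiv.Perm (Fin n)} (hw : IsMaxFor h w)
    {u : Equiv.Perm (Fin n)} (hu : Bounded h u)
    (hstep : ¬ ∃ i j : Fin n, i < j ∧ u i < u j ∧ u j ≤ h i) : u = w := by
  push_neg at hstep
  have hP : ∀ i j : Fin n, i < j → u j ≤ h i → u j < u i := by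
    intro i j hij hb
    rcases lt_trichotomy (u j) (u i) with hc | hc | hc
    · exact hc
    · exact absurd (u.injective hc) hij.ne'
    · exact absurd (hstep i j hij hc) (not_lt.2 hb)
  exact lexle_antisymm (hw.2 u hu) (lex_max_of_noswap hP hw.1)

lemma bounded_le_aux {h : Fin n → Fin n} (hh : IsHessenberg h) {w : Equiv.Perm (Fin n)}
    (hw : IsMaxFor h w) :
    ∀ k : ℕ, ∀ u : Equiv.Perm (Fin n), Bounded h u → n * n - lengthPerm u ≤ k →
      BruhatLE u w := by
  intro k
  induction k with
  | zero =>
    intro u hu hk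
    by_cases hstep : ∃ i j : Fin n, i < j ∧ u i < u j ∧ u j ≤ h i
    · exfalso
      obtain ⟨i, j, hij, hulo, _⟩ := hstep
      have h1 := length_lt_swap hij hulo
      have h2 := length_le (u * Equiv.swap i j)
      omega
    · rw [eq_of_nostep hw hu hstep]
      exact Relation.ReflTransGen.refl
  | succ k ih =>
    intro u hu hk
    by_cases hstep : ∃ i j : Fin n, i < j ∧ u i < u j ∧ u j ≤ h i
    · obtain ⟨i, j, hij, hulo, hbd⟩ := hstep
      have hlen := length_lt_swap hij hulo
      have hb2 : Bounded h (u * Equiv.swap i j) := by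
        intro c
        show u (Equiv.swap i j c) ≤ h c
        by_cases hci : c = i
        · rw [hci, Equiv.swap_apply_left]
          exact hbd
        · by_cases hcj : c = j
          · rw [hcj, Equiv.swap_apply_right]
            exact (hulo.le.trans hbd).trans (hh.2 hij.le)
          · rw [Equiv.swap_apply_of_ne_of_ne hci hcj]
            exact hu c
      have h2 := length_le (u * Equiv.swap i j)
      have hrec := ih (u * Equiv.swap i j) hb2 (by omega)
      exact Relation.ReflTransGen.head
        ⟨⟨Equiv.swap i j, ⟨i, j, hij.ne, rfl⟩, rfl⟩, hlen⟩ hrec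
    · rw [eq_of_nostep hw hu hstep]
      exact Relation.ReflTransGen.refl

lemma bounded_le {h : Fin n → Fin n} (hh : IsHessenberg h) {w : Equiv.Perm (Fin n)}
    (hw : IsMaxFor h w) {u : Equiv.Perm (Fin n)} (hu : Bounded h u) : BruhatLE u w :=
  bounded_le_aux hh hw (n * n) u hu (by omega)

lemma swap_bounded {h : Fin n → Fin n} (hh : IsHessenberg h) {i j : Fin n}
    (hij : i < j) (hbd : j ≤ h i) : Bounded h (Equiv.swap i j) := by
  intro c
  by_cases hci : c = i
  · rw [hci, Equiv.swap_apply_left]; exact hbd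
  · by_cases hcj : c = j
    · rw [hcj, Equiv.swap_apply_right]; exact hij.le.trans (hh.1 j)
    · rw [Equiv.swap_apply_of_ne_of_ne hci hcj]; exact hh.1 c

lemma card_filter_prod (Q : Fin n × Fin n → Prop) [DecidablePred Q] :
    (Finset.univ.filter Q).card
      = ∑ i : Fin n, (Finset.univ.filter fun j => Q (i, j)).card := by
  classical
  have h1 : ((Finset.univ.filter Q).card : ℕ)
      = ∑ p : Fin n × Fin n, if Q p then (1 : ℕ) else 0 := by
    simpa using Finset.natCast_card_filter (α := ℕ) Q Finset.univ
  rw [h1, Fintype.sum_prod_type]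
  refine Finset.sum_congr rfl fun i _ => ?_
  simpa using (Finset.natCast_card_filter (α := ℕ) (fun j => Q (i, j)) Finset.univ).symm

lemma max_P {h : Fin n → Fin n} (hh : IsHessenberg h) {w : Equiv.Perm (Fin n)}
    (hw : IsMaxFor h w) :
    ∀ i j : Fin n, i < j → w j ≤ h i → w j < w i := by
  intro i j hij hb
  by_contra hcon
  push_neg at hcon
  have hlt : w i < w j := lt_of_le_of_ne hcon fun e => hij.ne (w.injective e)
  have hvapp : ∀ c, (w * Equiv.swap i j) c = w (Equiv.swap i j c) := fun c => rfl
  have hv : Bounded h (w * Equiv.swap i j) := by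
    intro c
    rw [hvapp]
    by_cases hci : c = i
    · rw [hci, Equiv.swap_apply_left]; exact hb
    · by_cases hcj : c = j
      · rw [hcj, Equiv.swap_apply_right]
        exact (hlt.le.trans hb).trans (hh.2 hij.le)
      · rw [Equiv.swap_apply_of_ne_of_ne hci hcj]; exact hw.1 c
  rcases hw.2 _ hv with he | ⟨k, hpre, hltk⟩
  · have : (w * Equiv.swap i j) i = w i := by rw [he]
    rw [hvapp, Equiv.swap_apply_left] at this
    exact hij.ne' (w.injective this)
  · rcases lt_trichotomy k i with hk | hk | hk
    · have : (w * Equiv.swap i j) k = w k := by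
        rw [hvapp, Equiv.swap_apply_of_ne_of_ne hk.ne (hk.trans hij).ne]
      rw [this] at hltk
      exact lt_irrefl _ hltk
    · subst hk
      rw [hvapp, Equiv.swap_apply_left] at hltk
      exact absurd hltk (not_lt.2 hlt.le)
    · have := hpre i hk
      rw [hvapp, Equiv.swap_apply_left] at this
      exact hij.ne' (w.injective this)

lemma per_i_count {h : Fin n → Fin n} (hh : IsHessenberg h) {w : Equiv.Perm (Fin n)}
    (hbd : Bounded h w) (i : Fin n) :
    (Finset.univ.filter fun j : Fin n => i < j ∧ w j ≤ h i).card
      = (Finset.univ.filter fun j : Fin n => i < j ∧ j ≤ h i).card := by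
  classical
  have hR : (Finset.univ.filter fun j : Fin n => i < j ∧ j ≤ h i)
      = Finset.Ioc i (h i) := by
    ext j; simp [Finset.mem_Ioc]
  have hL : (Finset.univ.filter fun j : Fin n => i < j ∧ w j ≤ h i).card
      = (Finset.univ.filter fun v : Fin n => i < w.symm v ∧ v ≤ h i).card := by
    apply Finset.card_bij (fun j _ => w j)
    · intro j hj
      rw [Finset.mem_filter] at hj ⊢
      exact ⟨Finset.mem_univ _, by rw [Equiv.symm_apply_apply]; exact hj.2.1, hj.2.2⟩
    · intro j1 _ j2 _ e
      exact w.injective e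
    · intro v hv
      rw [Finset.mem_filter] at hv
      exact ⟨w.symm v, Finset.mem_filter.2 ⟨Finset.mem_univ _, hv.2.1,
        by rw [Equiv.apply_symm_apply]; exact hv.2.2⟩, w.apply_symm_apply v⟩
  have hsplit : (Finset.univ.filter fun v : Fin n => i < w.symm v ∧ v ≤ h i).card
      + (Finset.univ.filter fun v : Fin n => ¬ i < w.symm v ∧ v ≤ h i).card
      = (Finset.univ.filter fun v : Fin n => v ≤ h i).card := by
    have e1 : (Finset.univ.filter fun v : Fin n => i < w.symm v ∧ v ≤ h i)
        = (Finset.univ.filter fun v : Fin n => v ≤ h i).filter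
            (fun v => i < w.symm v) := by
      rw [Finset.filter_filter]
      apply Finset.filter_congr
      intro v _
      exact and_comm
    have e2 : (Finset.univ.filter fun v : Fin n => ¬ i < w.symm v ∧ v ≤ h i)
        = (Finset.univ.filter fun v : Fin n => v ≤ h i).filter
            (fun v => ¬ i < w.symm v) := by
      rw [Finset.filter_filter]
      apply Finset.filter_congr
      intro v _
      exact and_comm
    rw [e1, e2]
    exact Finset.card_filter_add_card_filter_not _
  have hc3 : (Finset.univ.filter fun v : Fin n => ¬ i < w.symm v ∧ v ≤ h i).card
      = (i : ℕ) + 1 := by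
    have e3 : (Finset.univ.filter fun v : Fin n => ¬ i < w.symm v ∧ v ≤ h i).card
        = (Finset.Iic i).card := by
      apply Finset.card_bij (fun v _ => w.symm v)
      · intro v hv
        rw [Finset.mem_filter] at hv
        rw [Finset.mem_Iic]
        exact not_lt.1 hv.2.1
      · intro v1 _ v2 _ e
        exact w.symm.injective e
      · intro a ha
        rw [Finset.mem_Iic] at ha
        refine ⟨w a, Finset.mem_filter.2 ⟨Finset.mem_univ _, ?_, ?_⟩,
          w.symm_apply_apply a⟩
        · rw [Equiv.symm_apply_apply]
          exact not_lt.2 ha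
        · exact (hbd a).trans (hh.2 ha)
    rw [e3, Fin.card_Iic]
  have hc4 : (Finset.univ.filter fun v : Fin n => v ≤ h i).card = ((h i : ℕ)) + 1 := by
    have e4 : (Finset.univ.filter fun v : Fin n => v ≤ h i) = Finset.Iic (h i) := by
      ext v; simp [Finset.mem_Iic]
    rw [e4, Fin.card_Iic]
  have hR' : (Finset.Ioc i (h i)).card = (h i : ℕ) - (i : ℕ) := Fin.card_Ioc i (h i)
  have hle : (i : ℕ) ≤ (h i : ℕ) := hh.1 i
  rw [hR, hL, hR']
  omega

end Stmt8Aux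

/-- for a Hessenberg function `h` with codominant permutation `w_h`,
a transposition `(i,j)` (`i < j`) satisfies `(i,j) ≤ w_h` in Bruhat order iff
`j ≤ h i`; in particular the number of such transpositions is `ℓ(w_h)`. -/
theorem stmt8 (n : ℕ) (h : Fin n → Fin n) (hh : IsHessenberg h)
    (w : Equiv.Perm (Fin n)) (hw : IsMaxFor h w) :
    (∀ i j : Fin n, i < j → (BruhatLE (Equiv.swap i j) w ↔ j ≤ h i)) ∧
    {p : Fin n × Fin n | p.1 < p.2 ∧ BruhatLE (Equiv.swap p.1 p.2) w}.ncard
      = lengthPerm w := by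
  classical
  have part1 : ∀ i j : Fin n, i < j → (BruhatLE (Equiv.swap i j) w ↔ j ≤ h i) := by
    intro i j hij
    constructor
    · exact Stmt8Aux.bruhat_imp hh hw.1 hij
    · intro hbd
      exact Stmt8Aux.bounded_le hh hw (Stmt8Aux.swap_bounded hh hij hbd)
  refine ⟨part1, ?_⟩
  have hset : {p : Fin n × Fin n | p.1 < p.2 ∧ BruhatLE (Equiv.swap p.1 p.2) w}
      = ↑(Finset.univ.filter fun p : Fin n × Fin n => p.1 < p.2 ∧ p.2 ≤ h p.1) := by
    ext p
    simp only [Set.mem_setOf_eq, Finset.coe_filter, Finset.mem_univ, true_and]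
    constructor
    · rintro ⟨h1, h2⟩; exact ⟨h1, (part1 _ _ h1).1 h2⟩
    · rintro ⟨h1, h2⟩; exact ⟨h1, (part1 _ _ h1).2 h2⟩
  rw [hset, Set.ncard_coe_finset]
  have hlen : lengthPerm w
      = (Finset.univ.filter fun p : Fin n × Fin n => p.1 < p.2 ∧ w p.2 ≤ h p.1).card := by
    unfold lengthPerm
    apply congrArg
    apply Finset.filter_congr
    intro p _
    constructor
    · rintro ⟨h1, h2⟩; exact ⟨h1, h2.le.trans (hw.1 p.1)⟩
    · rintro ⟨h1, h2⟩; exact ⟨h1, Stmt8Aux.max_P hh hw _ _ h1 h2⟩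
  rw [hlen, Stmt8Aux.card_filter_prod, Stmt8Aux.card_filter_prod]
  exact (Finset.sum_congr rfl fun i _ => (Stmt8Aux.per_i_count hh hw.1 i)).symm
end

section
/- Let h, h' : [n] → [n] be Hessenberg functions with h'(i) ≤ h(i) for all i, and let w_h, w_{h'} be the corresponding codominant permutations. Then w_{h'} ≤ w_h in the Bruhat order on S_n. -/
/-- greedy property -/
def GP {n : ℕ} (h : Fin n → Fin n) (w : Equiv.Perm (Fin n)) : Prop :=
  ∀ j c, c ≤ h j → (∀ l, l < j → w l ≠ c) → c ≤ w j

lemma isMaxFor_unique {n : ℕ} {h : Fin n → Fin n} {w w₂ : Equiv.Perm (Fin n)}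
    (hw : IsMaxFor h w) (hw₂ : IsMaxFor h w₂) : w = w₂ := by
  rcases hw₂.2 w hw.1 with he | ⟨i, hpre, hlt⟩
  · exact he
  rcases hw.2 w₂ hw₂.1 with he | ⟨i', hpre', hlt'⟩
  · exact he.symm
  rcases lt_trichotomy i i' with hii | hii | hii
  · exact absurd (hpre' i hii ▸ hlt) (lt_irrefl _)
  · subst hii; exact absurd (hlt.trans hlt') (lt_irrefl _)
  · exact absurd (hpre i' hii ▸ hlt') (lt_irrefl _)

lemma gp_of_isMaxFor {n : ℕ} {h : Fin n → Fin n} (hmono : Monotone h)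
    {w : Equiv.Perm (Fin n)} (hw : IsMaxFor h w) : GP h w := by
  intro j c hc hun
  by_contra hlt
  push_neg at hlt
  set k := w.symm c with hk
  have hwk : w k = c := w.apply_symm_apply c
  have hkj : j < k := by
    rcases lt_trichotomy k j with hh | hh | hh
    · exact absurd hwk (hun k hh)
    · exact absurd hwk (by rw [hh]; exact (ne_of_lt hlt))
    · exact hh
  set w₂ := w * Equiv.swap j k with hw₂def
  have hw₂j : w₂ j = c := by
    rw [hw₂def, Equiv.Perm.mul_apply, Equiv.swap_apply_left]
    exact hwk

  have hw₂k : w₂ k = w j := by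
    simp [hw₂def, Equiv.Perm.mul_apply, Equiv.swap_apply_right]
  have hw₂x : ∀ x, x ≠ j → x ≠ k → w₂ x = w x := by
    intro x hx1 hx2
    simp [hw₂def, Equiv.Perm.mul_apply, Equiv.swap_apply_of_ne_of_ne hx1 hx2]
  have hb₂ : Bounded h w₂ := by
    intro x
    rcases eq_or_ne x j with rfl | hxj
    · rw [hw₂j]; exact hc
    rcases eq_or_ne x k with rfl | hxk
    · rw [hw₂k]; exact (hw.1 j).trans (hmono hkj.le)
    · rw [hw₂x x hxj hxk]; exact hw.1 x
  rcases hw.2 w₂ hb₂ with he | ⟨i, hpre, hlt'⟩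
  · have : w₂ j = w j := by rw [he]
    rw [hw₂j] at this
    exact (ne_of_lt hlt).symm this
  rcases lt_trichotomy i j with hij | hij | hij
  · rw [hw₂x i (ne_of_lt hij) (ne_of_lt (hij.trans hkj))] at hlt'
    exact absurd hlt' (lt_irrefl _)
  · subst hij; rw [hw₂j] at hlt'; exact absurd (hlt.trans hlt') (lt_irrefl _)
  · have := hpre j hij
    rw [hw₂j] at this
    exact (ne_of_lt hlt).symm this

lemma isMaxFor_of_gp {n : ℕ} {h : Fin n → Fin n} {v : Equiv.Perm (Fin n)}
    (hb : Bounded h v) (hgp : GP h v) : IsMaxFor h v := by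
  refine ⟨hb, fun w₂ hb₂ => ?_⟩
  by_cases he : w₂ = v
  · exact Or.inl he
  right
  have hS : (Finset.univ.filter fun j => w₂ j ≠ v j).Nonempty := by
    by_contra hne
    rw [Finset.not_nonempty_iff_eq_empty, Finset.filter_eq_empty_iff] at hne
    exact he (Equiv.ext fun x => by simpa using hne (Finset.mem_univ x))
  set j := (Finset.univ.filter fun j => w₂ j ≠ v j).min' hS with hj
  have hjmem : w₂ j ≠ v j := by
    have := (Finset.univ.filter fun j => w₂ j ≠ v j).min'_mem hS
    simpa using this
  have hpre : ∀ l, l < j → w₂ l = v l := by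
    intro l hl
    by_contra hne
    have : j ≤ l := Finset.min'_le _ _ (by simpa using hne)
    exact absurd hl (not_lt_of_ge this)
  refine ⟨j, hpre, lt_of_le_of_ne ?_ hjmem⟩
  refine hgp j (w₂ j) (hb₂ j) ?_
  intro l hl
  rw [← hpre l hl]
  exact fun hc => (ne_of_lt hl) (w₂.injective hc)

lemma length_lt_swap {n : ℕ} (u : Equiv.Perm (Fin n)) (i k : Fin n)
    (hik : i < k) (hu : u i < u k) :
    lengthPerm u < lengthPerm (u * Equiv.swap i k) := by
  classical
  set τ := Equiv.swap i k with hτ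
  set u' := u * τ with hu'
  have hu'app : ∀ x, u' x = u (τ x) := fun x => rfl
  have hττ : ∀ x, τ (τ x) = x := fun x => Equiv.swap_apply_self i k x
  set φ : Fin n × Fin n → Fin n × Fin n :=
    fun p => if τ p.1 < τ p.2 then (τ p.1, τ p.2) else p with hφ
  set A : Equiv.Perm (Fin n) → Finset (Fin n × Fin n) :=
    fun w => Finset.univ.filter fun p : Fin n × Fin n => p.1 < p.2 ∧ w p.2 < w p.1 with hA
  have hmem : ∀ (w : Equiv.Perm (Fin n)) p, p ∈ A w ↔ p.1 < p.2 ∧ w p.2 < w p.1 := by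
    intro w p; simp [hA]
  -- φ is involutive on ordered pairs
  have hinvol : ∀ p : Fin n × Fin n, p.1 < p.2 → φ (φ p) = p := by
    intro p hp
    by_cases hb : τ p.1 < τ p.2
    · simp only [hφ, if_pos hb]
      simp only [hφ, hττ, if_pos hp]
    · simp only [hφ, if_neg hb]
  have hτi : τ i = k := Equiv.swap_apply_left i k
  have hτk : τ k = i := Equiv.swap_apply_right i k
  have hτx : ∀ x, x ≠ i → x ≠ k → τ x = x := fun x h1 h2 =>
    Equiv.swap_apply_of_ne_of_ne h1 h2
  have hikmem : (i, k) ∈ A u' := by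
    rw [hmem]
    refine ⟨hik, ?_⟩
    simp only [hu'app, hτi, hτk]
    exact hu
  have hkey : ∀ p ∈ A u, φ p ∈ (A u').erase (i, k) := by
    intro p hp
    rw [hmem] at hp
    obtain ⟨h12, hinv⟩ := hp
    by_cases hb : τ p.1 < τ p.2
    · simp only [hφ, if_pos hb]
      rw [Finset.mem_erase, hmem]
      constructor
      · intro hcon
        have h1 : τ p.1 = i := congrArg Prod.fst hcon
        have h2 : τ p.2 = k := congrArg Prod.snd hcon
        have e1 : p.1 = k := by rw [← hττ p.1, h1, hτi]
        have e2 : p.2 = i := by rw [← hττ p.2, h2, hτk]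
        rw [e1, e2] at h12
        exact absurd (h12.trans hik) (lt_irrefl _)
      · refine ⟨hb, ?_⟩
        simp only [hu'app, hττ]
        exact hinv
    · simp only [hφ, if_neg hb]
      -- first: p ≠ (i,k)
      have hpne : p ≠ (i, k) := by
        intro hcon
        rw [hcon] at hinv
        exact absurd (hu.trans hinv) (lt_irrefl _)
      rw [Finset.mem_erase, hmem]
      refine ⟨hpne, h12, ?_⟩
      -- goal : u' p.2 < u' p.1, i.e. u (τ p.2) < u (τ p.1)
      simp only [hu'app]
      by_cases h1i : p.1 = i
      · by_cases h2k : p.2 = k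
        · exact absurd (Prod.ext h1i h2k) hpne
        · have h2i : p.2 ≠ i := fun hc => (lt_irrefl _ (h1i ▸ hc ▸ h12))
          rw [h1i, hτi, hτx p.2 h2i h2k]
          calc u p.2 < u p.1 := hinv
            _ = u i := by rw [h1i]
            _ < u k := hu
      · by_cases h1k : p.1 = k
        · exfalso
          have h2i : p.2 ≠ i := fun hc => absurd (hik.trans (hc ▸ h1k ▸ h12)) (lt_irrefl _)
          have h2k : p.2 ≠ k := fun hc => (lt_irrefl _ (h1k ▸ hc ▸ h12))
          rw [h1k, hτk, hτx p.2 h2i h2k] at hb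
          exact hb (hik.trans (h1k ▸ h12))
        · -- p.1 ∉ {i, k}
          rw [hτx p.1 h1i h1k] at hb ⊢
          by_cases h2i : p.2 = i
          · exfalso
            rw [h2i, hτi] at hb
            exact hb ((h2i ▸ h12).trans hik)
          · by_cases h2k : p.2 = k
            · rw [h2k, hτk]
              calc u i < u k := hu
                _ = u p.2 := by rw [h2k]
                _ < u p.1 := hinv
            · rw [hτx p.2 h2i h2k] at hb
              exact absurd h12 hb
  have hinj : Set.InjOn φ (A u) := by
    intro a ha b hb heq
    rw [Finset.mem_coe, hmem] at ha hb
    calc a = φ (φ a) := (hinvol a ha.1).symm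
      _ = φ (φ b) := by rw [heq]
      _ = b := hinvol b hb.1
  have hcard : (A u).card ≤ ((A u').erase (i, k)).card :=
    Finset.card_le_card_of_injOn φ hkey hinj
  have : ((A u').erase (i, k)).card < (A u').card :=
    Finset.card_erase_lt_of_mem hikmem
  exact lt_of_le_of_lt hcard this


lemma main_ind {n : ℕ} (N : ℕ) : ∀ (h h' : Fin n → Fin n), (∑ i, ((h i) : ℕ)) = N →
    IsHessenberg h → IsHessenberg h' → (∀ i, h' i ≤ h i) →
    ∀ w w', IsMaxFor h w → IsMaxFor h' w' → BruhatLE w' w := by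
  induction N using Nat.strong_induction_on with
  | _ N IH =>
  intro h h' hN hh hh' hle w w' hw hw'
  by_cases hEq : ∀ i, h i ≤ h' i
  · have hhe : h' = h := funext fun i => le_antisymm (hle i) (hEq i)
    subst hhe
    rw [isMaxFor_unique hw' hw]
    exact Relation.ReflTransGen.refl
  · push_neg at hEq
    have hS : (Finset.univ.filter fun i => h' i < h i).Nonempty := by
      obtain ⟨i, hi⟩ := hEq
      exact ⟨i, by simp [hi]⟩
    obtain ⟨i, hi, hmin⟩ : ∃ i, h' i < h i ∧ ∀ j, h' j < h j → i ≤ j := by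
      refine ⟨(Finset.univ.filter fun i => h' i < h i).min' hS, ?_, ?_⟩
      · have := Finset.min'_mem _ hS
        simpa using this
      · intro j hj
        exact Finset.min'_le _ j (by simpa using hj)
    have hlt : ∀ j, j < i → h j < h i := by
      intro j hj
      rcases lt_or_eq_of_le (hh.2 hj.le) with hlt' | heqj
      · exact hlt'
      · exfalso
        have hj' : ¬ h' j < h j := fun hc => absurd hj (not_lt_of_ge (hmin j hc))
        have hj'' : h' j = h j := le_antisymm (hle j) (not_lt.1 hj')
        have : h i ≤ h' i :=
          calc h i = h j := heqj.symm
            _ = h' j := hj''.symm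
            _ ≤ h' i := hh'.2 hj.le
        exact absurd hi (not_lt_of_ge this)
    set m := h i with hm
    have him : i < m := lt_of_le_of_lt (hh'.1 i) hi
    have hmpos : 0 < (m : ℕ) := lt_of_le_of_lt (Nat.zero_le _) (Fin.lt_def.1 him)
    have hm1 : (m : ℕ) - 1 < n := lt_of_le_of_lt (Nat.sub_le _ _) m.isLt
    set m' : Fin n := ⟨(m : ℕ) - 1, hm1⟩ with hm'def
    have hm'm : m' < m := by
      rw [Fin.lt_def]
      exact Nat.sub_lt hmpos one_pos
    have hcm' : ∀ c : Fin n, c ≤ m' ↔ c < m := by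
      intro c
      rw [Fin.le_def, Fin.lt_def]
      simp only [hm'def]
      omega
    set h'' := Function.update h i m' with hh''def
    have h''i : h'' i = m' := by rw [hh''def]; simp
    have h''x : ∀ x, x ≠ i → h'' x = h x := by
      intro x hx
      rw [hh''def]
      exact Function.update_of_ne hx _ _
    have hh''Hess : IsHessenberg h'' := by
      constructor
      · intro j
        rcases eq_or_ne j i with hj | hj
        · rw [hj, h''i]; exact (hcm' i).2 him
        · rw [h''x j hj]; exact hh.1 j
      · intro b c hbc
        rcases eq_or_ne b i with hb2 | hb2
        · rcases eq_or_ne c i with hc2 | hc2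
          · rw [hb2, hc2]
          · rw [hb2, h''i, h''x c hc2]
            exact le_trans (le_of_lt hm'm) (hh.2 (hb2.symm.trans_le hbc))
        · rw [h''x b hb2]
          rcases eq_or_ne c i with hc2 | hc2
          · rw [hc2, h''i]
            exact (hcm' (h b)).2 (hlt b (lt_of_le_of_ne (hbc.trans_eq hc2) hb2))
          · rw [h''x c hc2]; exact hh.2 hbc
    have hle'' : ∀ j, h' j ≤ h'' j := by
      intro j
      rcases eq_or_ne j i with hj | hj
      · rw [hj, h''i]; exact (hcm' _).2 hi
      · rw [h''x j hj]; exact hle j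
    have hsum : (∑ j, ((h'' j) : ℕ)) < N := by
      rw [← hN]
      apply Finset.sum_lt_sum
      · intro j _
        rcases eq_or_ne j i with hj | hj
        · rw [hj, h''i]
          exact le_of_lt (Fin.lt_def.1 hm'm)
        · rw [h''x j hj]
      · exact ⟨i, Finset.mem_univ i, by rw [h''i]; exact Fin.lt_def.1 hm'm⟩
    have hgpw : GP h w := gp_of_isMaxFor hh.2 hw
    have hwi : w i = m := by
      refine le_antisymm (hw.1 i) (hgpw i m le_rfl ?_)
      intro l hl
      exact ne_of_lt (lt_of_le_of_lt (hw.1 l) (hlt l hl))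
    set T := (Finset.Iio m) \ ((Finset.Iio i).image w) with hTdef
    have hTmem : ∀ c, c ∈ T ↔ (c < m ∧ ∀ l, l < i → w l ≠ c) := by
      intro c
      rw [hTdef, Finset.mem_sdiff, Finset.mem_Iio]
      constructor
      · rintro ⟨h1, h2⟩
        refine ⟨h1, fun l hl hc => h2 ?_⟩
        rw [Finset.mem_image]
        exact ⟨l, Finset.mem_Iio.2 hl, hc⟩
      · rintro ⟨h1, h2⟩
        refine ⟨h1, fun hc => ?_⟩
        rw [Finset.mem_image] at hc
        obtain ⟨l, hl, hc⟩ := hc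
        exact h2 l (Finset.mem_Iio.1 hl) hc
    have hTne : T.Nonempty := by
      rw [← Finset.card_pos]
      have h2 : ((Finset.Iio i).image w).card ≤ (i : ℕ) :=
        le_trans Finset.card_image_le (le_of_eq (Fin.card_Iio i))
      have h3 : (m : ℕ) - (i : ℕ) ≤ T.card := by
        rw [hTdef]
        calc (m : ℕ) - (i : ℕ) = (Finset.Iio m).card - (i : ℕ) := by rw [Fin.card_Iio]
          _ ≤ (Finset.Iio m).card - ((Finset.Iio i).image w).card :=
              Nat.sub_le_sub_left h2 _
          _ ≤ _ := Finset.le_card_sdiff _ _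
      have h4 : (i : ℕ) < (m : ℕ) := Fin.lt_def.1 him
      omega
    set a := T.max' hTne with hadef
    have haT := T.max'_mem hTne
    rw [hTmem] at haT
    obtain ⟨ham, haun⟩ := haT
    have hamax : ∀ c, c < m → (∀ l, l < i → w l ≠ c) → c ≤ a :=
      fun c h1 h2 => T.le_max' c ((hTmem c).2 ⟨h1, h2⟩)
    set k := w.symm a with hkdef
    have hwk : w k = a := w.apply_symm_apply a
    have hik : i < k := by
      rcases lt_trichotomy k i with hc | hc | hc
      · exact absurd hwk (haun k hc)
      · exfalso
        rw [hc, hwi] at hwk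
        exact (ne_of_lt ham) hwk.symm
      · exact hc
    have hbetween : ∀ j, i < j → j < k → m < w j := by
      intro j hij hjk
      have haj : a < w j := by
        refine lt_of_le_of_ne (hgpw j a (le_trans (le_of_lt ham) (hh.2 (le_of_lt hij))) ?_) ?_
        · intro l hl hc
          have hlk : l = k := w.injective (hc.trans hwk.symm)
          exact absurd (hlk ▸ hl) (not_lt_of_ge (le_of_lt hjk))
        · intro hc
          have : k = j := w.injective (hwk.trans hc)
          exact absurd (this ▸ hjk) (lt_irrefl _)
      by_contra hcon
      push_neg at hcon
      rcases lt_or_eq_of_le hcon with hlt2 | heq2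
      · have hwja : w j ≤ a :=
          hamax (w j) hlt2 (fun l hl hc => (ne_of_lt (hl.trans hij)) (w.injective hc))
        exact absurd (lt_of_lt_of_le haj hwja) (lt_irrefl _)
      · have : j = i := w.injective (by rw [heq2, hwi])
        exact absurd (this ▸ hij) (lt_irrefl _)
    set v := w * Equiv.swap i k with hvdef
    have hvi : v i = a := by
      rw [hvdef, Equiv.Perm.mul_apply, Equiv.swap_apply_left]
      exact hwk
    have hvk : v k = m := by
      rw [hvdef, Equiv.Perm.mul_apply, Equiv.swap_apply_right]
      exact hwi
    have hvx : ∀ x, x ≠ i → x ≠ k → v x = w x := by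
      intro x h1 h2
      rw [hvdef, Equiv.Perm.mul_apply, Equiv.swap_apply_of_ne_of_ne h1 h2]
    have hbv : Bounded h'' v := by
      intro x
      rcases eq_or_ne x i with hxi | hxi
      · rw [hxi, hvi, h''i]; exact (hcm' a).2 ham
      rcases eq_or_ne x k with hxk | hxk
      · rw [hxk, hvk, h''x k (ne_of_gt hik)]
        exact hh.2 (le_of_lt hik)
      · rw [hvx x hxi hxk, h''x x hxi]; exact hw.1 x
    have hgpv : GP h'' v := by
      intro j c hc hun
      rcases lt_trichotomy j i with hji | hji | hji
      · rw [hvx j (ne_of_lt hji) (ne_of_lt (hji.trans hik))]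
        rw [h''x j (ne_of_lt hji)] at hc
        refine hgpw j c hc ?_
        intro l hl
        rw [← hvx l (ne_of_lt (hl.trans hji)) (ne_of_lt ((hl.trans hji).trans hik))]
        exact hun l hl
      · rw [hji] at hc hun ⊢
        rw [hvi]
        rw [h''i] at hc
        refine hamax c ((hcm' c).1 hc) ?_
        intro l hl
        rw [← hvx l (ne_of_lt hl) (ne_of_lt (hl.trans hik))]
        exact hun l hl
      · rcases lt_trichotomy j k with hjk | hjk | hjk
        · rw [hvx j (ne_of_gt hji) (ne_of_lt hjk)]
          rw [h''x j (ne_of_gt hji)] at hc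
          by_cases hcm2 : c = m
          · subst hcm2
            exact le_of_lt (hbetween j hji hjk)
          · refine hgpw j c hc ?_
            intro l hl
            rcases eq_or_ne l i with hli | hli
            · rw [hli, hwi]; exact fun hc2 => hcm2 hc2.symm
            · rw [← hvx l hli (ne_of_lt (hl.trans hjk))]
              exact hun l hl
        · subst hjk
          rw [hvk]
          by_contra hcon
          push_neg at hcon
          have h1 : c ≤ w k := by
            refine hgpw k c ?_ ?_
            · rw [h''x k (ne_of_gt hik)] at hc; exact hc
            · intro l hl
              rcases eq_or_ne l i with hli | hli
              · rw [hli, hwi]; exact ne_of_lt hcon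
              · rw [← hvx l hli (ne_of_lt hl)]
                exact hun l hl
          rw [hwk] at h1
          exact absurd ((lt_of_le_of_lt h1 ham).trans hcon) (lt_irrefl _)
        · rw [hvx j (ne_of_gt (hik.trans hjk)) (ne_of_gt hjk)]
          rw [h''x j (ne_of_gt (hik.trans hjk))] at hc
          refine hgpw j c hc ?_
          intro l hl
          rcases eq_or_ne l i with hli | hli
          · rw [hli, hwi, ← hvk]
            exact hun k hjk
          rcases eq_or_ne l k with rfl | hlk
          · rw [hwk, ← hvi]
            exact hun i (hik.trans hjk)
          · rw [← hvx l hli hlk]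
            exact hun l hl
    have hv'' : IsMaxFor h'' v := isMaxFor_of_gp hbv hgpv
    have hIH : BruhatLE w' v :=
      IH _ hsum h'' h' rfl hh''Hess hh' hle'' v w' hv'' hw'
    refine Relation.ReflTransGen.tail hIH ?_
    have hwv : w = v * Equiv.swap i k := by
      rw [hvdef, mul_assoc, Equiv.swap_mul_self, mul_one]
    refine ⟨⟨Equiv.swap i k, ⟨i, k, ne_of_lt hik, rfl⟩, hwv⟩, ?_⟩
    rw [hwv]
    exact length_lt_swap v i k hik (by rw [hvi, hvk]; exact ham)

/-- if `h' ≤ h` pointwise are Hessenberg functions, then the associated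
codominant permutations satisfy `w_{h'} ≤ w_h` in Bruhat order. -/
theorem stmt19 (n : ℕ) (h h' : Fin n → Fin n)
    (hh : IsHessenberg h) (hh' : IsHessenberg h') (hle : ∀ i, h' i ≤ h i)
    (w w' : Equiv.Perm (Fin n)) (hw : IsMaxFor h w) (hw' : IsMaxFor h' w') :
    BruhatLE w' w :=
  main_ind (∑ i, ((h i) : ℕ)) h h' rfl hh hh' hle w w' hw hw'
end
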